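/- arXiv:1603.05018 — 7 statements merged into one kernel-verified Lean document; each statement's English description precedes it below -/
import Mathlib

section
/- Let T be a finite tree, d a positive integer with d ≤ |V(T)|, and T* a subtree of T. Then the sum over all ordered pairs (s,t) with st an edge of T, s ∈ V(T*), t ∉ V(T*), of max(d - |T_{s→t}|, 0) is at most max(d - |V(T*)|, 0). -/
open SimpleGraph Finset

section TreeLeavingAux

variable {ι : Type*} [Fintype ι] [DecidableEq ι]

private lemma tlaux_not_reach {T : SimpleGraph ι} (hT : T.IsAcyclic) {s t : ι}
    (h : T.Adj s t) : ¬ (T.deleteEdges {s(s, t)}).Reachable s t :=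
  isBridge_iff.mp ((isAcyclic_iff_forall_adj_isBridge.mp hT) h)

private lemma tlaux_cover {T : SimpleGraph ι} (hc : T.Connected) {s t : ι} (h : T.Adj s t)
    (v : ι) :
    (T.deleteEdges {s(s, t)}).Reachable s v ∨ (T.deleteEdges {s(s, t)}).Reachable t v := by
  set G' := T.deleteEdges {s(s, t)} with hG'
  have step : ∀ a b, T.Adj a b → (G'.Reachable s a ∨ G'.Reachable t a) →
      (G'.Reachable s b ∨ G'.Reachable t b) := by
    intro a b hab hr
    by_cases he : s(a, b) = s(s, t)
    · rw [Sym2.eq_iff] at he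
      rcases he with ⟨rfl, rfl⟩ | ⟨rfl, rfl⟩
      · exact Or.inr (Reachable.refl _)
      · exact Or.inl (Reachable.refl _)
    · have hadj : G'.Adj a b := by
        rw [hG', deleteEdges_adj]
        exact ⟨hab, by simpa using he⟩
      rcases hr with hr | hr
      · exact Or.inl (hr.trans hadj.reachable)
      · exact Or.inr (hr.trans hadj.reachable)
  have aux : ∀ (a : ι) (w : T.Walk a v),
      (G'.Reachable s a ∨ G'.Reachable t a) → (G'.Reachable s v ∨ G'.Reachable t v) := by
    intro a w
    induction w with
    | nil => exact id
    | cons hadj p ih => exact fun hr => ih (step _ _ hadj hr)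
  obtain ⟨w⟩ := hc.preconnected s v
  exact aux s w (Or.inl (Reachable.refl _))

private lemma tlaux_reachA {T : SimpleGraph ι} {A : Finset ι}
    (hA : (T.induce (↑A : Set ι)).Connected) {s t : ι} (hs : s ∈ A) (ht : t ∉ A)
    {a : ι} (ha : a ∈ A) : (T.deleteEdges {s(s, t)}).Reachable s a := by
  have hr : (T.induce (↑A : Set ι)).Reachable ⟨s, by simpa using hs⟩ ⟨a, by simpa using ha⟩ :=
    hA.preconnected _ _
  have hf : ∀ {u v : (↑A : Set ι)}, (T.induce (↑A : Set ι)).Adj u v →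
      (T.deleteEdges {s(s, t)}).Adj u.val v.val := by
    rintro ⟨u, hu⟩ ⟨v, hv⟩ huv
    rw [deleteEdges_adj]
    refine ⟨huv, ?_⟩
    intro he
    rw [Set.mem_singleton_iff, Sym2.eq_iff] at he
    rcases he with ⟨h1, h2⟩ | ⟨h1, h2⟩
    · exact ht (h2 ▸ (by simpa using hv))
    · exact ht (h1 ▸ (by simpa using hu))
  exact hr.map ⟨Subtype.val, hf⟩

end TreeLeavingAux

/-- For a finite tree `T`, a positive integer `d ≤ |V(T)|` and a subtree
`T*` of `T` (given by its vertex set `A`, inducing a connected subgraph), the sum over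
ordered pairs `(s,t)` with `st ∈ E(T)`, `s ∈ A`, `t ∉ A` of `max(d - |T_{s→t}|, 0)`
is at most `max(d - |A|, 0)` (truncated natural subtraction). -/
theorem tree_leaving_edge_sum_upper_bound {ι : Type*} [Fintype ι] [DecidableEq ι]
    (T : SimpleGraph ι) [DecidableRel T.Adj] (hT : T.IsTree)
    (d : ℕ) (hd : 0 < d) (hdn : d ≤ Fintype.card ι)
    (A : Finset ι) (hA : (T.induce (↑A : Set ι)).Connected) :
    ∑ p ∈ Finset.univ.filter
        (fun p : ι × ι => T.Adj p.1 p.2 ∧ p.1 ∈ A ∧ p.2 ∉ A),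
        (d - Nat.card ((T.deleteEdges {s(p.1, p.2)}).connectedComponentMk p.1).supp)
      ≤ d - A.card := by
  classical
  obtain ⟨hconn, hacyc⟩ := hT
  set n := Fintype.card ι with hn
  set L := Finset.univ.filter
      (fun p : ι × ι => T.Adj p.1 p.2 ∧ p.1 ∈ A ∧ p.2 ∉ A) with hLdef
  have hmem : ∀ p ∈ L, T.Adj p.1 p.2 ∧ p.1 ∈ A ∧ p.2 ∉ A := by
    intro p hp
    rw [hLdef, Finset.mem_filter] at hp
    exact hp.2
  set C : ι × ι → Set ι :=
    fun p => ((T.deleteEdges {s(p.1, p.2)}).connectedComponentMk p.2).supp with hCdef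
  set c : ι × ι → ℕ := fun p => (C p).ncard with hcdef
  have hmemC : ∀ p v, v ∈ C p ↔ (T.deleteEdges {s(p.1, p.2)}).Reachable p.2 v := by
    intro p v
    simp only [hCdef, ConnectedComponent.mem_supp_iff, ConnectedComponent.eq]
    exact reachable_comm
  have hAC : ∀ p ∈ L, ∀ a ∈ A, a ∉ C p := by
    intro p hp a ha hmemc
    obtain ⟨hadj, hs, ht⟩ := hmem p hp
    have h1 := tlaux_reachA hA hs ht ha
    have h2 := (hmemC p a).mp hmemc
    exact tlaux_not_reach hacyc hadj (h1.trans h2.symm)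
  have hSC : ∀ p ∈ L,
      ((T.deleteEdges {s(p.1, p.2)}).connectedComponentMk p.1).supp = (C p)ᶜ := by
    intro p hp
    obtain ⟨hadj, hs, ht⟩ := hmem p hp
    ext v
    simp only [Set.mem_compl_iff, hCdef, ConnectedComponent.mem_supp_iff,
      ConnectedComponent.eq]
    constructor
    · intro h1 h2
      exact tlaux_not_reach hacyc hadj (h1.symm.trans h2)
    · intro h2
      rcases tlaux_cover hconn hadj v with h | h
      · exact h.symm
      · exact absurd h.symm h2
  have hcle : ∀ p, c p ≤ n := by
    intro p
    have h := Set.ncard_le_ncard (Set.subset_univ (C p)) Set.finite_univ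
    rwa [Set.ncard_univ, Nat.card_eq_fintype_card] at h
  have hcompl : ∀ p, (C p)ᶜ.ncard = n - c p := by
    intro p
    have h2 : c p + (C p)ᶜ.ncard = n := by
      rw [hcdef]
      rw [Set.ncard_add_ncard_compl, Nat.card_eq_fintype_card]
    omega
  have hcard : ∀ p ∈ L,
      Nat.card ((T.deleteEdges {s(p.1, p.2)}).connectedComponentMk p.1).supp = n - c p := by
    intro p hp
    rw [Nat.card_coe_set_eq, hSC p hp, hcompl]
  have hdisj : ∀ p ∈ L, ∀ q ∈ L, p ≠ q → ∀ v, v ∈ C p → v ∈ C q → False := by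
    intro p hp q hq hpq v hvp hvq
    obtain ⟨hadjp, hsp, htp⟩ := hmem p hp
    obtain ⟨hadjq, hsq, htq⟩ := hmem q hq
    obtain ⟨w⟩ := (hmemC p v).mp hvp
    have hsupp : ∀ u ∈ w.support, u ∈ C p := by
      intro u hu
      exact (hmemC p u).mpr ⟨w.takeUntil u hu⟩
    have hWq : ∀ e ∈ w.edges, e ∈ (T.deleteEdges {s(q.1, q.2)}).edgeSet := by
      intro e he
      have h1 : e ∈ (T.deleteEdges {s(p.1, p.2)}).edgeSet := w.edges_subset_edgeSet he
      rw [edgeSet_deleteEdges] at h1 ⊢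
      refine ⟨h1.1, ?_⟩
      intro hee
      rw [Set.mem_singleton_iff] at hee
      have hq1 : q.1 ∈ w.support := Walk.fst_mem_support_of_mem_edges w (hee ▸ he)
      exact hAC p hp q.1 hsq (hsupp _ hq1)
    have w2 : (T.deleteEdges {s(q.1, q.2)}).Walk p.2 v := w.transfer _ hWq
    have hadj2 : (T.deleteEdges {s(q.1, q.2)}).Adj p.2 p.1 := by
      rw [deleteEdges_adj]
      refine ⟨hadjp.symm, ?_⟩
      rw [Set.mem_singleton_iff]
      intro he
      rw [Sym2.eq_iff] at he
      rcases he with ⟨h1, h2⟩ | ⟨h1, h2⟩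
      · exact htp (h1 ▸ hsq)
      · exact hpq (Prod.ext h2 h1)
    have r1 : (T.deleteEdges {s(q.1, q.2)}).Reachable q.2 v := (hmemC q v).mp hvq
    have r2 : (T.deleteEdges {s(q.1, q.2)}).Reachable v p.2 := ⟨w2.reverse⟩
    have r3 : (T.deleteEdges {s(q.1, q.2)}).Reachable q.1 p.1 :=
      tlaux_reachA hA hsq htq hsp
    exact tlaux_not_reach hacyc hadjq
      (((r3.trans hadj2.symm.reachable).trans r2.symm).trans r1.symm)
  -- sum of the c p over any subset of L is at most n - |A|
  have hsumC : ∀ P ⊆ L, ∑ p ∈ P, c p ≤ n - A.card := by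
    intro P hP
    have hdF : ∀ p ∈ P, ∀ q ∈ P, p ≠ q → Disjoint ((C p).toFinset) ((C q).toFinset) := by
      intro p hp q hq hpq
      rw [Finset.disjoint_left]
      intro v hvp hvq
      exact hdisj p (hP hp) q (hP hq) hpq v (Set.mem_toFinset.mp hvp) (Set.mem_toFinset.mp hvq)
    calc ∑ p ∈ P, c p = ∑ p ∈ P, ((C p).toFinset).card :=
          Finset.sum_congr rfl (fun p _ => Set.ncard_eq_toFinset_card' (C p))
      _ = (P.biUnion fun p => (C p).toFinset).card := (Finset.card_biUnion hdF).symm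
      _ ≤ Aᶜ.card := by
          apply Finset.card_le_card
          intro v hv
          rw [Finset.mem_biUnion] at hv
          obtain ⟨p, hp, hvp⟩ := hv
          rw [Finset.mem_compl]
          intro hvA
          exact hAC p (hP hp) v hvA (Set.mem_toFinset.mp hvp)
      _ = n - A.card := by rw [Finset.card_compl]
  have hgoal : ∑ p ∈ L,
        (d - Nat.card ((T.deleteEdges {s(p.1, p.2)}).connectedComponentMk p.1).supp)
      = ∑ p ∈ L, (d - (n - c p)) :=
    Finset.sum_congr rfl (fun p hp => by rw [hcard p hp])
  rw [hgoal]
  set P := L.filter (fun p => n - c p < d) with hPdef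
  have hsplit : ∑ p ∈ L, (d - (n - c p)) = ∑ p ∈ P, (d - (n - c p)) := by
    symm
    apply Finset.sum_subset (Finset.filter_subset _ _)
    intro p hp hnp
    have hnlt : ¬ (n - c p < d) := fun h => hnp (Finset.mem_filter.mpr ⟨hp, h⟩)
    omega
  rw [hsplit]
  rcases Finset.eq_empty_or_nonempty P with hPe | ⟨p0, hp0⟩
  · rw [hPe, Finset.sum_empty]
    exact Nat.zero_le _
  · have e1 : ∑ p ∈ P, (d - (n - c p)) = ∑ p ∈ P, (c p - (n - d)) := by
      apply Finset.sum_congr rfl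
      intro p hp
      have h1 : n - c p < d := (Finset.mem_filter.mp hp).2
      have h2 : c p ≤ n := hcle p
      omega
    have e2 : ∑ p ∈ P, (c p - (n - d)) + P.card * (n - d) = ∑ p ∈ P, c p := by
      calc ∑ p ∈ P, (c p - (n - d)) + P.card * (n - d)
          = ∑ p ∈ P, (c p - (n - d)) + ∑ _p ∈ P, (n - d) := by
            rw [Finset.sum_const, smul_eq_mul]
        _ = ∑ p ∈ P, ((c p - (n - d)) + (n - d)) := (Finset.sum_add_distrib).symm
        _ = ∑ p ∈ P, c p := by
            apply Finset.sum_congr rfl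
            intro p hp
            have h1 : n - c p < d := (Finset.mem_filter.mp hp).2
            have h2 : c p ≤ n := hcle p
            omega
    have h3 : ∑ p ∈ P, c p ≤ n - A.card := hsumC P (Finset.filter_subset _ _)
    have h4 : 0 < P.card := Finset.card_pos.mpr ⟨p0, hp0⟩
    have h5 : (n - d) ≤ P.card * (n - d) := Nat.le_mul_of_pos_left _ h4
    have hkey : ∑ p ∈ P, (c p - (n - d)) + (n - d) ≤ n - A.card := by
      calc ∑ p ∈ P, (c p - (n - d)) + (n - d)
          ≤ ∑ p ∈ P, (c p - (n - d)) + P.card * (n - d) := by omega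
        _ = ∑ p ∈ P, c p := e2
        _ ≤ n - A.card := h3
    have hAn : A.card ≤ n := Finset.card_le_univ A
    rw [e1]
    omega
end

section
/- Every graph G of treewidth at most k and maximum degree Δ(G) ≥ 2k has chromatic index χ'(G) = Δ(G). -/
open SimpleGraph

open SimpleGraph

/-- `G` has a tree-decomposition of width at most `k`: a tree `T` with bags `B t ⊆ V(G)`
covering all vertices and edges, such that for each vertex `v` the set of tree nodes whose
bag contains `v` induces a connected (nonempty) subgraph of `T`, and every bag has at most
`k + 1` vertices. -/
def HasTreeDecompositionOfWidth {V : Type*} (G : SimpleGraph V) (k : ℕ) : Prop :=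
  ∃ (ι : Type) (T : SimpleGraph ι) (B : ι → Finset V),
    T.IsTree ∧
    (∀ v : V, ∃ t, v ∈ B t) ∧
    (∀ u v : V, G.Adj u v → ∃ t, u ∈ B t ∧ v ∈ B t) ∧
    (∀ v : V, (T.induce {t : ι | v ∈ B t}).Connected) ∧
    (∀ t, (B t).card ≤ k + 1)

/-- The chromatic index of `G`: the least `n` such that the edges of `G` can be properly
coloured with `n` colours, i.e. there is an assignment of colours `< n` to the edges such
that any two distinct edges sharing a vertex get different colours. -/
noncomputable def chromaticIndex {V : Type*} (G : SimpleGraph V) : ℕ :=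
  sInf { n : ℕ | ∃ c : Sym2 V → ℕ,
    (∀ e ∈ G.edgeSet, c e < n) ∧
    (∀ e₁ ∈ G.edgeSet, ∀ e₂ ∈ G.edgeSet,
      e₁ ≠ e₂ → (∃ v : V, v ∈ e₁ ∧ v ∈ e₂) → c e₁ ≠ c e₂) }

namespace VizingAux
set_option linter.unusedSectionVars false
set_option maxHeartbeats 1600000


attribute [local instance] Classical.propDecidable

variable {V : Type*} [DecidableEq V]

def Proper (E : Finset (Sym2 V)) (n : ℕ) (c : Sym2 V → ℕ) : Prop :=
  (∀ e ∈ E, c e < n) ∧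
  ∀ e₁ ∈ E, ∀ e₂ ∈ E, e₁ ≠ e₂ → (∃ v : V, v ∈ e₁ ∧ v ∈ e₂) → c e₁ ≠ c e₂

def EColorable (E : Finset (Sym2 V)) (n : ℕ) : Prop := ∃ c, Proper E n c

def MissAt (E : Finset (Sym2 V)) (c : Sym2 V → ℕ) (u : V) (γ : ℕ) : Prop :=
  ∀ e ∈ E, u ∈ e → c e ≠ γ

lemma missAt_exists {E : Finset (Sym2 V)} {n : ℕ} {c : Sym2 V → ℕ} (hp : Proper E n c)
    {u : V} (hd : (E.filter (fun e => u ∈ e)).card < n) :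
    ∃ γ < n, MissAt E c u γ := by
  set I := (E.filter (fun e => u ∈ e)).image c with hI
  have hIsub : I ⊆ Finset.range n := by
    intro γ hγ
    simp only [hI, Finset.mem_image] at hγ
    obtain ⟨e, he, rfl⟩ := hγ
    exact Finset.mem_range.2 (hp.1 e (Finset.mem_filter.1 he).1)
  have hIcard : I.card < (Finset.range n).card := by
    calc I.card ≤ _ := Finset.card_image_le
    _ < n := hd
    _ = (Finset.range n).card := (Finset.card_range n).symm
  have hss : I ⊂ Finset.range n :=
    Finset.ssubset_iff_subset_ne.2 ⟨hIsub, fun h => by rw [h] at hIcard; exact lt_irrefl _ hIcard⟩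
  obtain ⟨γ, hγr, hγI⟩ := Finset.exists_of_ssubset hss
  refine ⟨γ, Finset.mem_range.1 hγr, ?_⟩
  intro e he hue hc
  exact hγI (Finset.mem_image.2 ⟨e, Finset.mem_filter.2 ⟨he, hue⟩, hc⟩)

def KG (E : Finset (Sym2 V)) (c : Sym2 V → ℕ) (γ δ : ℕ) : SimpleGraph V where
  Adj a b := a ≠ b ∧ s(a,b) ∈ E ∧ (c s(a,b) = γ ∨ c s(a,b) = δ)
  symm := by
    constructor; intro a b ⟨h1, h2, h3⟩
    refine ⟨h1.symm, ?_, ?_⟩ <;> rwa [Sym2.eq_swap]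
  loopless := ⟨fun a h => h.1 rfl⟩

noncomputable def swap (E : Finset (Sym2 V)) (c : Sym2 V → ℕ) (γ δ : ℕ) (r : V) :
    Sym2 V → ℕ := fun e =>
  if e ∈ E ∧ (c e = γ ∨ c e = δ) ∧ (∃ a, a ∈ e ∧ (KG E c γ δ).Reachable r a)
  then (if c e = γ then δ else γ) else c e

lemma reach_all {E : Finset (Sym2 V)} {c : Sym2 V → ℕ} {γ δ : ℕ} {r : V} {e : Sym2 V}
    (he : e ∈ E) (hc : c e = γ ∨ c e = δ) {a b : V} (ha : a ∈ e) (hb : b ∈ e)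
    (hra : (KG E c γ δ).Reachable r a) : (KG E c γ δ).Reachable r b := by
  rcases eq_or_ne a b with rfl | hab
  · exact hra
  · have he' : e = s(a,b) := (Sym2.mem_and_mem_iff hab).1 ⟨ha, hb⟩
    subst he'
    exact hra.trans (Adj.reachable ⟨hab, he, hc⟩)

lemma swap_untouched {E : Finset (Sym2 V)} {c : Sym2 V → ℕ} {γ δ : ℕ} {r u : V}
    (hu : ¬ (KG E c γ δ).Reachable r u) {e : Sym2 V} (hue : u ∈ e) :
    swap E c γ δ r e = c e := by
  rw [swap, if_neg]
  rintro ⟨he, hc, a, ha, hra⟩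
  exact hu (reach_all he hc ha hue hra)

lemma swap_eq_formula {E : Finset (Sym2 V)} {c : Sym2 V → ℕ} {γ δ : ℕ} {r u : V} {e : Sym2 V}
    (he : e ∈ E) (hue : u ∈ e) (hr : (KG E c γ δ).Reachable r u) :
    swap E c γ δ r e = if c e = γ then δ else if c e = δ then γ else c e := by
  by_cases h1 : c e = γ
  · rw [swap, if_pos ⟨he, Or.inl h1, u, hue, hr⟩, if_pos h1, if_pos h1]
  · rw [if_neg h1]
    by_cases h2 : c e = δ
    · rw [swap, if_pos ⟨he, Or.inr h2, u, hue, hr⟩, if_neg h1, if_pos h2]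
    · rw [if_neg h2, swap, if_neg]
      rintro ⟨-, hc, -⟩
      rcases hc with h | h
      · exact h1 h
      · exact h2 h

lemma swap_proper {E : Finset (Sym2 V)} {n : ℕ} {c : Sym2 V → ℕ} {γ δ : ℕ} {r : V}
    (hγ : γ < n) (hδ : δ < n) (hγδ : γ ≠ δ) (hp : Proper E n c) :
    Proper E n (swap E c γ δ r) := by
  have hval : ∀ e ∈ E, swap E c γ δ r e = c e ∨ swap E c γ δ r e = γ ∨ swap E c γ δ r e = δ := by
    intro e he
    rw [swap]
    split
    · split
      · right; right; rfl
      · right; left; rfl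
    · left; rfl
  constructor
  · intro e he
    rcases hval e he with h | h | h <;> rw [h]
    · exact hp.1 e he
    · exact hγ
    · exact hδ
  · rintro e₁ he₁ e₂ he₂ hne ⟨v, hv1, hv2⟩ heq
    by_cases hr : (KG E c γ δ).Reachable r v
    · rw [swap_eq_formula he₁ hv1 hr, swap_eq_formula he₂ hv2 hr] at heq
      have : c e₁ = c e₂ := by
        by_cases a1 : c e₁ = γ <;> by_cases a2 : c e₂ = γ <;>
          by_cases b1 : c e₁ = δ <;> by_cases b2 : c e₂ = δ <;>
          simp_all
      exact hp.2 e₁ he₁ e₂ he₂ hne ⟨v, hv1, hv2⟩ this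
    · rw [swap_untouched hr hv1, swap_untouched hr hv2] at heq
      exact hp.2 e₁ he₁ e₂ he₂ hne ⟨v, hv1, hv2⟩ heq

lemma swap_missAt_swap {E : Finset (Sym2 V)} {c : Sym2 V → ℕ} {γ δ : ℕ} {r u : V}
    (hγδ : γ ≠ δ) (hr : (KG E c γ δ).Reachable r u) (hm : MissAt E c u γ) :
    MissAt E (swap E c γ δ r) u δ := by
  intro e he hue hc
  rw [swap_eq_formula he hue hr] at hc
  by_cases h1 : c e = γ
  · exact hm e he hue h1
  · rw [if_neg h1] at hc
    by_cases h2 : c e = δ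
    · rw [if_pos h2] at hc; exact hγδ hc
    · rw [if_neg h2] at hc; exact h2 hc

lemma swap_missAt_other {E : Finset (Sym2 V)} {c : Sym2 V → ℕ} {γ δ ε : ℕ} {r u : V}
    (hεγ : ε ≠ γ) (hεδ : ε ≠ δ) (hm : MissAt E c u ε) :
    MissAt E (swap E c γ δ r) u ε := by
  intro e he hue hc
  rw [swap] at hc
  split at hc
  · split at hc
    · exact hεδ hc.symm
    · exact hεγ hc.symm
  · exact hm e he hue hc

lemma swap_missAt_untouched {E : Finset (Sym2 V)} {c : Sym2 V → ℕ} {γ δ ε : ℕ} {r u : V}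
    (hu : ¬ (KG E c γ δ).Reachable r u) (hm : MissAt E c u ε) :
    MissAt E (swap E c γ δ r) u ε := by
  intro e he hue hc
  rw [swap_untouched hu hue] at hc
  exact hm e he hue hc







lemma path_prefix {H : SimpleGraph V}
    (hdeg : ∀ v a b c : V, H.Adj v a → H.Adj v b → H.Adj v c → a = b ∨ a = c ∨ b = c)
    {u a : V} (P : H.Walk u a) :
    ∀ {b : V} (Q : H.Walk u b) (X : Set V), P.IsPath → Q.IsPath →
      (∀ w w', H.Adj u w → H.Adj u w' → w ∉ X → w' ∉ X → w = w') →
      (∀ z ∈ P.support, z ∉ X) → (∀ z ∈ Q.support, z ∉ X) →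
      a ∈ Q.support ∨ b ∈ P.support := by
  induction P with
  | nil => intro b Q X _ _ _ _ _; left; exact Q.start_mem_support
  | @cons u p a hadj P ih =>
    intro b Q X hP hQ hu hPX hQX
    cases Q with
    | nil => right; exact Walk.start_mem_support _
    | @cons _ q _ hadj' Q' =>
      have hpq : p = q := by
        refine hu p q hadj hadj' ?_ ?_
        · exact hPX p (by simp)
        · exact hQX q (by simp)
      subst hpq
      have hP' : P.IsPath := hP.of_cons
      have hQ' : Q'.IsPath := hQ.of_cons
      have huP : u ∉ P.support := (Walk.cons_isPath_iff _ _).1 hP |>.2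
      have huQ : u ∉ Q'.support := (Walk.cons_isPath_iff _ _).1 hQ |>.2
      have key := ih Q' (X ∪ {u}) hP' hQ'
        (by
          intro w w' hw hw' hwX hw'X
          rcases hdeg p w w' u hw hw' hadj.symm with h | h | h
          · exact h
          · exact absurd (Set.mem_union_right _ (h ▸ rfl)) hwX
          · exact absurd (Set.mem_union_right _ (h ▸ rfl)) hw'X)
        (by
          intro z hz hmem
          rcases hmem with h | h
          · exact hPX z (by simp [hz]) h
          · exact huP (by rwa [Set.mem_singleton_iff.1 h] at hz))
        (by
          intro z hz hmem
          rcases hmem with h | h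
          · exact hQX z (by simp [hz]) h
          · exact huQ (by rwa [Set.mem_singleton_iff.1 h] at hz))
      rcases key with h | h
      · left; simp [h]
      · right; simp [h]

lemma interior_two_neighbors {H : SimpleGraph V} {v : V} :
    ∀ {x b : V} (Q : H.Walk x b), Q.IsPath → v ∈ Q.support → v ≠ x → v ≠ b →
      ∃ w w', H.Adj v w ∧ H.Adj v w' ∧ w ≠ w' := by
  intro x b Q
  induction Q with
  | nil =>
    intro _ hv hvx _
    simp only [Walk.support_nil, List.mem_singleton] at hv
    exact absurd hv hvx
  | @cons x q _ hadj Q' ih =>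
    intro hQ hv hvx hvb
    simp only [Walk.support_cons, List.mem_cons] at hv
    rcases hv with rfl | hv
    · exact absurd rfl hvx
    · by_cases hvq : v = q
      · subst hvq
        cases Q' with
        | nil => exact absurd rfl hvb
        | @cons _ q₂ _ hadj2 Q'' =>
          refine ⟨x, q₂, hadj.symm, hadj2, ?_⟩
          intro hxq2
          have hxQ' : x ∉ (Walk.cons hadj2 Q'').support := (Walk.cons_isPath_iff _ _).1 hQ |>.2
          exact hxQ' (by simp [hxq2])
      · exact ih hQ.of_cons hv hvq hvb

lemma three_leaves {H : SimpleGraph V}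
    (hdeg : ∀ v a b c : V, H.Adj v a → H.Adj v b → H.Adj v c → a = b ∨ a = c ∨ b = c)
    {x a b : V}
    (hx : ∀ w w', H.Adj x w → H.Adj x w' → w = w')
    (ha : ∀ w w', H.Adj a w → H.Adj a w' → w = w')
    (hb : ∀ w w', H.Adj b w → H.Adj b w' → w = w')
    (hax : a ≠ x) (hbx : b ≠ x) (hab : a ≠ b) :
    ¬(H.Reachable x a ∧ H.Reachable x b) := by
  rintro ⟨hra, hrb⟩
  obtain ⟨P0⟩ := hra
  obtain ⟨Q0⟩ := hrb
  set P := P0.bypass with hPdef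
  set Q := Q0.bypass with hQdef
  have hP : P.IsPath := P0.bypass_isPath
  have hQ : Q.IsPath := Q0.bypass_isPath
  have := path_prefix hdeg P Q ∅ hP hQ
    (fun w w' hw hw' _ _ => hx w w' hw hw')
    (fun z _ => Set.notMem_empty z) (fun z _ => Set.notMem_empty z)
  rcases this with h | h
  · obtain ⟨w, w', hw, hw', hne⟩ := interior_two_neighbors Q hQ h hax hab
    exact hne (ha w w' hw hw')
  · obtain ⟨w, w', hw, hw', hne⟩ := interior_two_neighbors P hP h hbx (hab ∘ Eq.symm ∘ id)
    exact hne (hb w w' hw hw')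

lemma claimA {n : ℕ} {F : Finset (Sym2 V)} {x y₁ : V} (he₀ : s(x,y₁) ∈ F)
    {s : ℕ} {ys : ℕ → V}
    (h1 : ys 1 = y₁)
    (hxne : ∀ i, 1 ≤ i → i ≤ s → ys i ≠ x)
    (hinj : ∀ i j, 1 ≤ i → i ≤ s → 1 ≤ j → j ≤ s → ys i = ys j → i = j)
    (hmem : ∀ i, 2 ≤ i → i ≤ s → s(x, ys i) ∈ F.erase s(x,y₁)) :
    ∀ i, 1 ≤ i → i ≤ s → ∀ (c : Sym2 V → ℕ) (γ : ℕ),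
      Proper (F.erase s(x,y₁)) n c → γ < n →
      (∀ t, 2 ≤ t → t ≤ i → ∃ j, 1 ≤ j ∧ j < t ∧
          MissAt (F.erase s(x,y₁)) c (ys j) (c (s(x, ys t)))) →
      MissAt (F.erase s(x,y₁)) c x γ → MissAt (F.erase s(x,y₁)) c (ys i) γ →
      EColorable F n := by
  intro i
  induction i using Nat.strong_induction_on with
  | _ i ih =>
  intro hi1 his c γ hp hγ hwit hmx hmy
  set E' := F.erase s(x,y₁) with hE'
  by_cases hi2 : i < 2
  · -- i = 1 : color the uncolored edge with γ
    have hiq : i = 1 := by omega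
    subst hiq
    rw [h1] at hmy
    refine ⟨fun e => if e = s(x,y₁) then γ else c e, ?_, ?_⟩
    · intro e he
      by_cases h : e = s(x,y₁)
      · simp only [if_pos h]; exact hγ
      · simp only [if_neg h]; exact hp.1 e (Finset.mem_erase.2 ⟨h, he⟩)
    · rintro e₁ he₁ e₂ he₂ hne ⟨v, hv1, hv2⟩
      by_cases h1' : e₁ = s(x,y₁) <;> by_cases h2' : e₂ = s(x,y₁)
      · exact absurd (h1'.trans h2'.symm) hne
      · simp only [if_pos h1', if_neg h2']
        have he₂' : e₂ ∈ E' := Finset.mem_erase.2 ⟨h2', he₂⟩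
        subst h1'
        rcases Sym2.mem_iff.1 hv1 with rfl | rfl
        · exact fun h => (hmx e₂ he₂' hv2 h.symm)
        · exact fun h => (hmy e₂ he₂' hv2 h.symm)
      · simp only [if_neg h1', if_pos h2']
        have he₁' : e₁ ∈ E' := Finset.mem_erase.2 ⟨h1', he₁⟩
        subst h2'
        rcases Sym2.mem_iff.1 hv2 with rfl | rfl
        · exact hmx e₁ he₁' hv1
        · exact hmy e₁ he₁' hv1
      · simp only [if_neg h1', if_neg h2']
        exact hp.2 e₁ (Finset.mem_erase.2 ⟨h1', he₁⟩) e₂ (Finset.mem_erase.2 ⟨h2', he₂⟩)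
          hne ⟨v, hv1, hv2⟩
  · -- i ≥ 2 : recolor the fan edge xyᵢ with γ and recurse at the witness index
    have hi2' : 2 ≤ i := by omega
    obtain ⟨j, hj1, hji, hwj⟩ := hwit i hi2' le_rfl
    set β := c (s(x, ys i)) with hβ
    have hedgei : s(x, ys i) ∈ E' := hmem i hi2' his
    have hβn : β < n := hp.1 _ hedgei
    have hγβ : γ ≠ β := by
      intro h
      exact hmx _ hedgei (Sym2.mem_mk_left _ _) (h ▸ rfl)
    set c'' : Sym2 V → ℕ := fun e => if e = s(x, ys i) then γ else c e with hc''
    have hysij : ys j ≠ ys i := fun h => absurd (hinj j i hj1 (by omega) hi1 his h) (by omega)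
    have hnotmem : ∀ e : Sym2 V, ys j ∈ e → e ≠ s(x, ys i) := by
      intro e hm he
      subst he
      rcases Sym2.mem_iff.1 hm with h | h
      · exact hxne j hj1 (by omega) h
      · exact hysij h
    have hp'' : Proper E' n c'' := by
      constructor
      · intro e he
        by_cases h : e = s(x, ys i)
        · simp only [hc'', if_pos h]; exact hγ
        · simp only [hc'', if_neg h]; exact hp.1 e he
      · rintro e₁ he₁ e₂ he₂ hne ⟨v, hv1, hv2⟩
        by_cases h1' : e₁ = s(x, ys i) <;> by_cases h2' : e₂ = s(x, ys i)
        · exact absurd (h1'.trans h2'.symm) hne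
        · simp only [hc'', if_pos h1', if_neg h2']
          subst h1'
          rcases Sym2.mem_iff.1 hv1 with rfl | rfl
          · exact fun h => hmx e₂ he₂ hv2 h.symm
          · exact fun h => hmy e₂ he₂ hv2 h.symm
        · simp only [hc'', if_neg h1', if_pos h2']
          subst h2'
          rcases Sym2.mem_iff.1 hv2 with rfl | rfl
          · exact hmx e₁ he₁ hv1
          · exact hmy e₁ he₁ hv1
        · simp only [hc'', if_neg h1', if_neg h2']
          exact hp.2 e₁ he₁ e₂ he₂ hne ⟨v, hv1, hv2⟩
    have hmx'' : MissAt E' c'' x β := by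
      intro e he hxe
      by_cases h : e = s(x, ys i)
      · simp only [hc'', if_pos h]; exact fun hh => hγβ hh
      · simp only [hc'', if_neg h]
        intro hh
        exact hp.2 e he _ hedgei h ⟨x, hxe, Sym2.mem_mk_left _ _⟩ (hh.trans hβ)
    have hmyj'' : MissAt E' c'' (ys j) β := by
      intro e he hm
      simp only [hc'', if_neg (hnotmem e hm)]
      exact hwj e he hm
    have hwit'' : ∀ t, 2 ≤ t → t ≤ j → ∃ j', 1 ≤ j' ∧ j' < t ∧
        MissAt E' c'' (ys j') (c'' (s(x, ys t))) := by
      intro t ht2 htj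
      obtain ⟨j', hj'1, hj't, hwj'⟩ := hwit t ht2 (by omega)
      have hyst : ys t ≠ ys i := fun h =>
        absurd (hinj t i (by omega) (by omega) hi1 his h) (by omega)
      have hedget : (s(x, ys t) : Sym2 V) ≠ s(x, ys i) := by
        intro h
        exact hyst (Sym2.congr_right.1 h)
      have hnotmem' : ∀ e : Sym2 V, ys j' ∈ e → e ≠ s(x, ys i) := by
        intro e hm he
        subst he
        rcases Sym2.mem_iff.1 hm with h | h
        · exact hxne j' hj'1 (by omega) h
        · exact absurd (hinj j' i hj'1 (by omega) hi1 his h) (by omega)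
      refine ⟨j', hj'1, hj't, ?_⟩
      intro e he hm
      simp only [hc'', if_neg (hnotmem' e hm), if_neg hedget]
      exact hwj' e he hm
    exact ih j hji hj1 (by omega) c'' β hp'' hβn hwit'' hmx'' hmyj''



lemma claimB {n : ℕ} {F : Finset (Sym2 V)} {x y₁ : V} (he₀ : s(x,y₁) ∈ F)
    {s : ℕ} {ys : ℕ → V}
    (h1 : ys 1 = y₁)
    (hxne : ∀ i, 1 ≤ i → i ≤ s → ys i ≠ x)
    (hinj : ∀ i j, 1 ≤ i → i ≤ s → 1 ≤ j → j ≤ s → ys i = ys j → i = j)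
    (hmem : ∀ i, 2 ≤ i → i ≤ s → s(x, ys i) ∈ F.erase s(x,y₁))
    {c : Sym2 V → ℕ} {γ : ℕ} (hp : Proper (F.erase s(x,y₁)) n c) (hγ : γ < n)
    (hwit : ∀ t, 2 ≤ t → t ≤ s → ∃ j, 1 ≤ j ∧ j < t ∧
        MissAt (F.erase s(x,y₁)) c (ys j) (c (s(x, ys t))))
    {i j : ℕ} (hi1 : 1 ≤ i) (his : i ≤ s) (hj1 : 1 ≤ j) (hjs : j ≤ s) (hij : i ≠ j)
    (hmi : MissAt (F.erase s(x,y₁)) c (ys i) γ)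
    (hmj : MissAt (F.erase s(x,y₁)) c (ys j) γ)
    (hδex : ∃ δ, δ < n ∧ MissAt (F.erase s(x,y₁)) c x δ) :
    EColorable F n := by
  classical
  set E' := F.erase s(x,y₁) with hE'
  obtain ⟨δ, hδn, hmxδ⟩ := hδex
  by_cases hxγ : MissAt E' c x γ
  · exact claimA he₀ h1 hxne hinj hmem i hi1 his c γ hp hγ
      (fun t ht2 hti => hwit t ht2 (by omega)) hxγ hmi
  by_cases hiδ : MissAt E' c (ys i) δ
  · exact claimA he₀ h1 hxne hinj hmem i hi1 his c δ hp hδn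
      (fun t ht2 hti => hwit t ht2 (by omega)) hmxδ hiδ
  by_cases hjδ : MissAt E' c (ys j) δ
  · exact claimA he₀ h1 hxne hinj hmem j hj1 hjs c δ hp hδn
      (fun t ht2 htj => hwit t ht2 (by omega)) hmxδ hjδ
  have hγδ : γ ≠ δ := by
    intro h
    exact hxγ (h ▸ hmxδ)
  -- the Kempe chain graph
  set H := KG E' c γ δ with hH
  have hadj_mem : ∀ {a b : V}, H.Adj a b → s(a,b) ∈ E' ∧ (c s(a,b) = γ ∨ c s(a,b) = δ) :=
    fun h => ⟨h.2.1, h.2.2⟩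
  have hdeg : ∀ v a b d : V, H.Adj v a → H.Adj v b → H.Adj v d → a = b ∨ a = d ∨ b = d := by
    intro v a b d hva hvb hvd
    by_contra hcon
    push_neg at hcon
    obtain ⟨hab, had, hbd⟩ := hcon
    have e1 : (s(v,a) : Sym2 V) ≠ s(v,b) := fun h => hab (Sym2.congr_right.1 h)
    have e2 : (s(v,a) : Sym2 V) ≠ s(v,d) := fun h => had (Sym2.congr_right.1 h)
    have e3 : (s(v,b) : Sym2 V) ≠ s(v,d) := fun h => hbd (Sym2.congr_right.1 h)
    have d1 := hp.2 _ (hadj_mem hva).1 _ (hadj_mem hvb).1 e1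
      ⟨v, Sym2.mem_mk_left _ _, Sym2.mem_mk_left _ _⟩
    have d2 := hp.2 _ (hadj_mem hva).1 _ (hadj_mem hvd).1 e2
      ⟨v, Sym2.mem_mk_left _ _, Sym2.mem_mk_left _ _⟩
    have d3 := hp.2 _ (hadj_mem hvb).1 _ (hadj_mem hvd).1 e3
      ⟨v, Sym2.mem_mk_left _ _, Sym2.mem_mk_left _ _⟩
    rcases (hadj_mem hva).2 with h1 | h1 <;> rcases (hadj_mem hvb).2 with h2 | h2 <;>
      rcases (hadj_mem hvd).2 with h3 | h3 <;> simp_all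
  have hleaf : ∀ (u : V) (ε : ℕ), (c s(u,u) = γ ∨ True) → MissAt E' c u ε →
      (ε = γ ∨ ε = δ) → ∀ w w', H.Adj u w → H.Adj u w' → w = w' := by
    intro u ε _ hmiss hεor w w' hw hw'
    have hcw : c s(u,w) = γ ∨ c s(u,w) = δ := (hadj_mem hw).2
    have hcw' : c s(u,w') = γ ∨ c s(u,w') = δ := (hadj_mem hw').2
    have hnw : c s(u,w) ≠ ε := hmiss _ (hadj_mem hw).1 (Sym2.mem_mk_left _ _)
    have hnw' : c s(u,w') ≠ ε := hmiss _ (hadj_mem hw').1 (Sym2.mem_mk_left _ _)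
    have hcc : c s(u,w) = c s(u,w') := by
      rcases hεor with rfl | rfl
      · rcases hcw with h | h
        · exact absurd h hnw
        · rcases hcw' with h' | h'
          · exact absurd h' hnw'
          · rw [h, h']
      · rcases hcw with h | h
        · rcases hcw' with h' | h'
          · rw [h, h']
          · exact absurd h' hnw'
        · exact absurd h hnw
    by_contra hww
    have : (s(u,w) : Sym2 V) ≠ s(u,w') := fun h => hww (Sym2.congr_right.1 h)
    exact hp.2 _ (hadj_mem hw).1 _ (hadj_mem hw').1 this
      ⟨u, Sym2.mem_mk_left _ _, Sym2.mem_mk_left _ _⟩ hcc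
  have hleafx : ∀ w w', H.Adj x w → H.Adj x w' → w = w' :=
    hleaf x δ (Or.inr trivial) hmxδ (Or.inr rfl)
  have hleafi : ∀ w w', H.Adj (ys i) w → H.Adj (ys i) w' → w = w' :=
    hleaf (ys i) γ (Or.inr trivial) hmi (Or.inl rfl)
  have hleafj : ∀ w w', H.Adj (ys j) w → H.Adj (ys j) w' → w = w' :=
    hleaf (ys j) γ (Or.inr trivial) hmj (Or.inl rfl)
  have hnboth := three_leaves hdeg hleafx hleafi hleafj
    (hxne i hi1 his) (hxne j hj1 hjs)
    (fun h => hij (hinj i j hi1 his hj1 hjs h))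
  -- the main reduction, for a fan vertex not reachable from x
  have main : ∀ i', 1 ≤ i' → i' ≤ s → MissAt E' c (ys i') γ →
      ¬ H.Reachable x (ys i') → EColorable F n := by
    intro i' hi'1 hi's hmi' hnr
    set r := ys i' with hr
    have hrx : ¬ H.Reachable r x := fun h => hnr h.symm
    set c' := swap E' c γ δ r with hc'
    have hp' : Proper E' n c' := swap_proper hγ hδn hγδ hp
    have hmx' : MissAt E' c' x δ := swap_missAt_untouched hrx hmxδ
    have hmi'' : MissAt E' c' (ys i') δ := swap_missAt_swap hγδ (Reachable.refl r) hmi'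
    have hfanedge : ∀ t, 2 ≤ t → t ≤ s → c' (s(x, ys t)) = c (s(x, ys t)) := by
      intro t ht2 hts
      exact swap_untouched hrx (Sym2.mem_mk_left _ _)
    by_cases hall : ∀ t, 2 ≤ t → t ≤ s → ∃ j', 1 ≤ j' ∧ j' < t ∧
        MissAt E' c' (ys j') (c' (s(x, ys t)))
    · exact claimA he₀ h1 hxne hinj hmem i' hi'1 hi's c' δ hp' hδn
        (fun t ht2 hti => hall t ht2 (by omega)) hmx' hmi''
    · push_neg at hall
      have hex : ∃ t, 2 ≤ t ∧ t ≤ s ∧ ∀ j', 1 ≤ j' → j' < t →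
          ¬ MissAt E' c' (ys j') (c' (s(x, ys t))) := by
        obtain ⟨t, ht2, hts, hno⟩ := hall
        exact ⟨t, ht2, hts, fun j' h1' h2' hcon => by
          exact absurd (hno j' h1' h2') (fun hn => hn hcon)⟩
      classical
      set t₀ := Nat.find hex with ht₀
      obtain ⟨ht₀2, ht₀s, ht₀no⟩ := Nat.find_spec hex
      have hmin : ∀ t, 2 ≤ t → t < t₀ → t ≤ s → ∃ j', 1 ≤ j' ∧ j' < t ∧
          MissAt E' c' (ys j') (c' (s(x, ys t))) := by
        intro t ht2 htlt hts
        by_contra hcon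
        push_neg at hcon
        exact Nat.find_min hex htlt ⟨ht2, hts,
          fun j' h1' h2' => hcon j' h1' h2'⟩
      obtain ⟨j₁, hj₁1, hj₁t, hwj₁⟩ := hwit t₀ ht₀2 ht₀s
      set β := c (s(x, ys t₀)) with hβ
      have hedge : s(x, ys t₀) ∈ E' := hmem t₀ ht₀2 ht₀s
      have hc'edge : c' (s(x, ys t₀)) = β := hfanedge t₀ ht₀2 ht₀s
      have hnm : ¬ MissAt E' c' (ys j₁) β := by
        intro hcon
        exact ht₀no j₁ hj₁1 hj₁t (hc'edge ▸ hcon)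
      have hreach : H.Reachable r (ys j₁) := by
        by_contra hcon
        exact hnm (swap_missAt_untouched hcon hwj₁)
      have hβδ : β ≠ δ := hmxδ _ hedge (Sym2.mem_mk_left _ _)
      have hβγ : β = γ := by
        by_contra hcon
        exact hnm (swap_missAt_other hcon hβδ hwj₁)
      have hmj₁' : MissAt E' c' (ys j₁) δ :=
        swap_missAt_swap hγδ hreach (hβγ ▸ hwj₁)
      exact claimA he₀ h1 hxne hinj hmem j₁ hj₁1 (by omega) c' δ hp' hδn
        (fun t ht2 htj => hmin t ht2 (by omega) (by omega)) hmx' hmj₁'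
  by_cases hri : H.Reachable x (ys i)
  · by_cases hrj : H.Reachable x (ys j)
    · exact absurd ⟨hri, hrj⟩ hnboth
    · exact main j hj1 hjs hmj hrj
  · exact main i hi1 his hmi hri

section ValLemma

variable [Fintype V]

/-- Vizing adjacency lemma, in minimal-counterexample form. -/
lemma val_lemma {n : ℕ} {F : Finset (Sym2 V)}
    (hND : ∀ e ∈ F, ¬ e.IsDiag)
    (hdegF : ∀ u : V, (F.filter (fun e => u ∈ e)).card ≤ n)
    {x y₁ : V} (he₀ : s(x,y₁) ∈ F)
    (hunc : ¬ EColorable F n)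
    (hcol : EColorable (F.erase s(x,y₁)) n) :
    ∃ T : Finset V, n + 1 ≤ T.card + (F.filter (fun e => y₁ ∈ e)).card ∧
      ∀ z ∈ T, z ≠ y₁ ∧ s(x,z) ∈ F ∧ (F.filter (fun e => z ∈ e)).card = n := by
  classical
  obtain ⟨c, hp⟩ := hcol
  set E' := F.erase s(x,y₁) with hE'
  have hxy : x ≠ y₁ := fun h => hND _ he₀ (by rw [Sym2.mk_isDiag_iff]; exact h)
  have hE'sub : E' ⊆ F := Finset.erase_subset _ _
  -- E'-degrees
  have hdegE' : ∀ u : V, (E'.filter (fun e => u ∈ e)).card ≤ n := by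
    intro u
    exact le_trans (Finset.card_le_card (Finset.filter_subset_filter _ hE'sub)) (hdegF u)
  have hdegE'lt : ∀ u : V, u ∈ (s(x,y₁) : Sym2 V) →
      (E'.filter (fun e => u ∈ e)).card + 1 ≤ (F.filter (fun e => u ∈ e)).card := by
    intro u hu
    have h1 : E'.filter (fun e => u ∈ e) ⊆ (F.filter (fun e => u ∈ e)).erase s(x,y₁) := by
      intro e he
      rw [Finset.mem_filter, hE', Finset.mem_erase] at he
      exact Finset.mem_erase.2 ⟨he.1.1, Finset.mem_filter.2 ⟨he.1.2, he.2⟩⟩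
    have h2 : s(x,y₁) ∈ F.filter (fun e => u ∈ e) := Finset.mem_filter.2 ⟨he₀, hu⟩
    calc (E'.filter (fun e => u ∈ e)).card + 1
        ≤ ((F.filter (fun e => u ∈ e)).erase s(x,y₁)).card + 1 :=
          by exact Nat.add_le_add_right (Finset.card_le_card h1) 1
      _ = (F.filter (fun e => u ∈ e)).card :=
          by rw [Finset.card_erase_of_mem h2]; have := Finset.card_pos.2 ⟨_, h2⟩; omega
  -- missing colors at x
  have hxlt : (E'.filter (fun e => x ∈ e)).card < n := by
    have := hdegE'lt x (Sym2.mem_mk_left _ _)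
    have := hdegF x
    omega
  have hδex : ∃ δ, δ < n ∧ MissAt E' c x δ := by
    obtain ⟨δ, h1, h2⟩ := missAt_exists hp hxlt
    exact ⟨δ, h1, h2⟩
  -- multifans
  set FanProp : ℕ → (ℕ → V) → Prop := fun s ys =>
    ys 1 = y₁ ∧ (∀ i, 1 ≤ i → i ≤ s → ys i ≠ x) ∧
    (∀ i j, 1 ≤ i → i ≤ s → 1 ≤ j → j ≤ s → ys i = ys j → i = j) ∧
    (∀ i, 2 ≤ i → i ≤ s → s(x, ys i) ∈ E') ∧
    (∀ t, 2 ≤ t → t ≤ s → ∃ j, 1 ≤ j ∧ j < t ∧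
      MissAt E' c (ys j) (c (s(x, ys t)))) with hFanProp
  set L : Set ℕ := {s | ∃ ys, FanProp s ys} with hL
  have h1L : 1 ∈ L := by
    refine ⟨fun _ => y₁, rfl, fun i _ _ h => hxy h.symm, ?_, ?_, ?_⟩
    · intro i j h1 h2 h3 h4 _; omega
    · intro i h1 h2; omega
    · intro t h1 h2; omega
  have hbdd : ∀ s ∈ L, s ≤ Fintype.card V := by
    rintro s ⟨ys, hy1, hyx, hyinj, _, _⟩
    have : (Finset.Icc 1 s).card ≤ (Finset.univ : Finset V).card := by
      apply Finset.card_le_card_of_injOn ys (fun a _ => Finset.mem_univ _)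
      intro a ha b hb hab
      rw [Finset.coe_Icc, Set.mem_Icc] at ha hb
      exact hyinj a b ha.1 ha.2 hb.1 hb.2 hab
    rwa [Nat.card_Icc, Nat.add_sub_cancel] at this
  have hLbdd : BddAbove L := ⟨Fintype.card V, fun s hs => hbdd s hs⟩
  set S := sSup L with hS
  have hSL : S ∈ L := Nat.sSup_mem ⟨1, h1L⟩ hLbdd
  have hS1 : 1 ≤ S := le_csSup hLbdd h1L
  obtain ⟨ys, hy1, hyx, hyinj, hymem, hywit⟩ := hSL
  -- facts from claims A and B
  have hA : ∀ t γ, 1 ≤ t → t ≤ S → γ < n → MissAt E' c x γ → MissAt E' c (ys t) γ → False := by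
    intro t γ h1 h2 h3 h4 h5
    exact hunc (claimA he₀ hy1 hyx hyinj hymem t h1 h2 c γ hp h3
      (fun t' a b => hywit t' a (by omega)) h4 h5)
  have hB : ∀ t t' γ, 1 ≤ t → t ≤ S → 1 ≤ t' → t' ≤ S → t ≠ t' → γ < n →
      MissAt E' c (ys t) γ → MissAt E' c (ys t') γ → False := by
    intro t t' γ a b a' b' hne hγ h h'
    exact hunc (claimB he₀ hy1 hyx hyinj hymem hp hγ hywit a b a' b' hne h h' hδex)
  -- the missing-color finsets
  set M : ℕ → Finset ℕ := fun t => (Finset.range n).filter (fun γ => MissAt E' c (ys t) γ)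
    with hM
  have hMcard : ∀ t : ℕ, n ≤ (M t).card + (E'.filter (fun e => ys t ∈ e)).card := by
    intro t
    set u := ys t with hu
    set I := (E'.filter (fun e => u ∈ e)).image c with hI
    have hIsub : I ⊆ Finset.range n := by
      intro γ hγ
      simp only [hI, Finset.mem_image] at hγ
      obtain ⟨e, he, rfl⟩ := hγ
      exact Finset.mem_range.2 (hp.1 e (Finset.mem_filter.1 he).1)
    have hsub : Finset.range n \ I ⊆ (Finset.range n).filter (fun γ => MissAt E' c u γ) := by
      intro γ hγ
      rw [Finset.mem_sdiff] at hγ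
      refine Finset.mem_filter.2 ⟨hγ.1, ?_⟩
      intro e he hue hc
      exact hγ.2 (Finset.mem_image.2 ⟨e, Finset.mem_filter.2 ⟨he, hue⟩, hc⟩)
    have h1 : (Finset.range n).card - I.card ≤ (Finset.range n \ I).card :=
      Finset.le_card_sdiff _ _
    have h2 : I.card ≤ (E'.filter (fun e => u ∈ e)).card := Finset.card_image_le
    have h3 : (Finset.range n \ I).card ≤ (M t).card := by
      apply Finset.card_le_card
      intro γ hγ
      have := hsub hγ
      simp only [hM]
      simpa using this
    rw [Finset.card_range] at h1
    omega
  -- maximality: each missing color of a fan vertex appears on a fan edge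
  have hmaximal : ∀ t, 1 ≤ t → t ≤ S → ∀ γ ∈ M t,
      ∃ i, 2 ≤ i ∧ i ≤ S ∧ c (s(x, ys i)) = γ := by
    intro t ht1 htS γ hγ
    rw [hM, Finset.mem_filter, Finset.mem_range] at hγ
    obtain ⟨hγn, hγmiss⟩ := hγ
    have hnx : ¬ MissAt E' c x γ := fun h => hA t γ ht1 htS hγn h hγmiss
    rw [MissAt] at hnx
    push_neg at hnx
    obtain ⟨e, he, hxe, hce⟩ := hnx
    obtain ⟨z, rfl⟩ := Sym2.mem_iff_exists.1 hxe
    have hzx : z ≠ x := by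
      intro h
      exact hND _ (hE'sub he) (by rw [Sym2.mk_isDiag_iff]; exact h.symm)
    by_contra hcon
    push_neg at hcon
    have hznotfan : ∀ i, 1 ≤ i → i ≤ S → ys i ≠ z := by
      intro i hi1 hiS h
      rcases Nat.lt_or_ge i 2 with h2 | h2
      · have : i = 1 := by omega
        subst this
        rw [hy1] at h
        rw [← h] at he
        exact (Finset.mem_erase.1 he).1 rfl
      · exact hcon i h2 hiS (by rw [h]; exact hce)
    -- extend the fan
    have hext : S + 1 ∈ L := by
      refine ⟨fun m => if m = S + 1 then z else ys m, ?_, ?_, ?_, ?_, ?_⟩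
      · simp only [if_neg (by omega : (1:ℕ) ≠ S + 1)]; exact hy1
      · intro i hi1 hiS1
        by_cases h : i = S + 1
        · simp only [if_pos h]; exact hzx
        · simp only [if_neg h]; exact hyx i hi1 (by omega)
      · intro i j hi1 hiS1 hj1 hjS1 hij
        by_cases h : i = S + 1 <;> by_cases h' : j = S + 1
        · omega
        · simp only [if_pos h, if_neg h'] at hij
          exact absurd hij.symm (hznotfan j hj1 (by omega))
        · simp only [if_neg h, if_pos h'] at hij
          exact absurd hij (hznotfan i hi1 (by omega))
        · simp only [if_neg h, if_neg h'] at hij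
          exact hyinj i j hi1 (by omega) hj1 (by omega) hij
      · intro i hi2 hiS1
        by_cases h : i = S + 1
        · simp only [if_pos h]; exact he
        · simp only [if_neg h]; exact hymem i hi2 (by omega)
      · intro t' ht'2 ht'S1
        by_cases h : t' = S + 1
        · refine ⟨t, ht1, by omega, ?_⟩
          simp only [if_pos h, if_neg (by omega : t ≠ S + 1), hce]
          exact hγmiss
        · obtain ⟨j, hj1, hjt, hjw⟩ := hywit t' ht'2 (by omega)
          refine ⟨j, hj1, hjt, ?_⟩
          simp only [if_neg (by omega : j ≠ S + 1), if_neg (by omega : t' ≠ S + 1)]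
          exact hjw
    have := le_csSup hLbdd hext
    omega
  -- counting
  set U2 := Finset.Icc 2 S with hU2
  set U := Finset.Icc 1 S with hU
  have hUins : U = insert 1 U2 := by
    ext m
    simp only [hU, hU2, Finset.mem_Icc, Finset.mem_insert]
    omega
  have h1notU2 : (1:ℕ) ∉ U2 := by simp [hU2]
  have hdisj : ∀ a ∈ U, ∀ b ∈ U, a ≠ b → Disjoint (M a) (M b) := by
    intro a ha b hb hab
    rw [Finset.disjoint_left]
    intro γ hγa hγb
    rw [hM, Finset.mem_filter, Finset.mem_range] at hγa hγb
    rw [hU, Finset.mem_Icc] at ha hb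
    exact hB a b γ ha.1 ha.2 hb.1 hb.2 hab hγa.1 hγa.2 hγb.2
  have hbU : (U.biUnion M).card = ∑ t ∈ U, (M t).card := Finset.card_biUnion hdisj
  have hbUsub : U.biUnion M ⊆ U2.image (fun i => c (s(x, ys i))) := by
    intro γ hγ
    rw [Finset.mem_biUnion] at hγ
    obtain ⟨t, ht, hγt⟩ := hγ
    rw [hU, Finset.mem_Icc] at ht
    obtain ⟨i, hi2, hiS, hci⟩ := hmaximal t ht.1 ht.2 γ hγt
    exact Finset.mem_image.2 ⟨i, Finset.mem_Icc.2 ⟨hi2, hiS⟩, hci⟩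
  have hsum_le : ∑ t ∈ U, (M t).card ≤ S - 1 := by
    calc ∑ t ∈ U, (M t).card = (U.biUnion M).card := hbU.symm
      _ ≤ (U2.image (fun i => c (s(x, ys i)))).card := Finset.card_le_card hbUsub
      _ ≤ U2.card := Finset.card_image_le
      _ = S - 1 := by rw [hU2, Nat.card_Icc]; omega
  -- the full-degree fan vertices
  set D := U2.filter (fun t => (F.filter (fun e => ys t ∈ e)).card = n) with hD
  have hDsub : D ⊆ U2 := Finset.filter_subset _ _
  -- each non-full fan vertex contributes at least one missing color
  have hlow : ∀ t ∈ U2 \ D, 1 ≤ (M t).card := by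
    intro t ht
    rw [Finset.mem_sdiff] at ht
    have ht2 := ht.1
    rw [hU2, Finset.mem_Icc] at ht2
    have hne : (F.filter (fun e => ys t ∈ e)).card ≠ n := by
      intro h
      exact ht.2 (Finset.mem_filter.2 ⟨ht.1, h⟩)
    have hlt : (F.filter (fun e => ys t ∈ e)).card < n :=
      lt_of_le_of_ne (hdegF _) hne
    have := hMcard t
    have hE'le : (E'.filter (fun e => ys t ∈ e)).card ≤ (F.filter (fun e => ys t ∈ e)).card :=
      Finset.card_le_card (Finset.filter_subset_filter _ hE'sub)
    omega
  have hsum_ge : ∑ t ∈ U, (M t).card ≥ (M 1).card + (U2.card - D.card) := by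
    rw [hUins, Finset.sum_insert h1notU2]
    have : U2.card - D.card = (U2 \ D).card := (Finset.card_sdiff_of_subset hDsub).symm
    rw [this]
    have : (U2 \ D).card ≤ ∑ t ∈ U2, (M t).card := by
      calc (U2 \ D).card = ∑ t ∈ U2 \ D, 1 := by simp
        _ ≤ ∑ t ∈ U2 \ D, (M t).card := Finset.sum_le_sum hlow
        _ ≤ ∑ t ∈ U2, (M t).card := Finset.sum_le_sum_of_subset (Finset.sdiff_subset)
    omega
  have hDcard : n + 1 ≤ D.card + (F.filter (fun e => y₁ ∈ e)).card := by
    have hU2card : U2.card = S - 1 := by rw [hU2, Nat.card_Icc]; omega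
    have hDle : D.card ≤ U2.card := Finset.card_le_card hDsub
    have h2 := hdegE'lt y₁ (Sym2.mem_mk_right _ _)
    have h1 := hMcard 1
    rw [hy1] at h1
    omega
  refine ⟨D.image (fun t => ys t), ?_, ?_⟩
  · have : (D.image (fun t => ys t)).card = D.card := by
      apply Finset.card_image_of_injOn
      intro a ha b hb hab
      simp only [Finset.mem_coe, hD, Finset.mem_filter, hU2, Finset.mem_Icc] at ha hb
      exact hyinj a b (by omega) (by omega) (by omega) (by omega) hab
    omega
  · intro z hz
    rw [Finset.mem_image] at hz
    obtain ⟨t, ht, rfl⟩ := hz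
    simp only [hD, Finset.mem_filter, hU2, Finset.mem_Icc] at ht
    have ht' : 2 ≤ t ∧ t ≤ S := ht.1
    refine ⟨?_, ?_, ht.2⟩
    · intro h
      rw [← hy1] at h
      have := hyinj t 1 (by omega) ht'.2 le_rfl hS1 h
      omega
    · exact hE'sub (hymem t ht'.1 ht'.2)

end ValLemma

lemma colorable_of_degeneracy {V : Type*} [Fintype V] [DecidableEq V] (G : SimpleGraph V)
    [DecidableRel G.Adj] (k n : ℕ) (hn : 2*k ≤ n) (hdeg : ∀ u, G.degree u ≤ n)
    (hdegen : ∀ S : Finset V, S.Nonempty → ∃ v ∈ S, (S.filter (fun u => G.Adj v u)).card ≤ k) :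
    EColorable G.edgeFinset n := by
  classical
  by_contra hun
  set P := G.edgeFinset.powerset.filter (fun E => ¬ EColorable E n) with hP
  have hPne : P.Nonempty :=
    ⟨G.edgeFinset, Finset.mem_filter.2 ⟨Finset.mem_powerset.2 subset_rfl, hun⟩⟩
  obtain ⟨E, hEP, hmin⟩ := Finset.exists_min_image P Finset.card hPne
  rw [hP, Finset.mem_filter, Finset.mem_powerset] at hEP
  obtain ⟨hEsub, hEunc⟩ := hEP
  have hEne : E.Nonempty := by
    rw [Finset.nonempty_iff_ne_empty]
    intro h
    subst h
    exact hEunc ⟨fun _ => 0, fun e he => absurd he (Finset.notMem_empty e),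
      fun e he => absurd he (Finset.notMem_empty e)⟩
  have hND : ∀ e ∈ E, ¬ e.IsDiag := by
    intro e he
    exact SimpleGraph.not_isDiag_of_mem_edgeSet G (SimpleGraph.mem_edgeFinset.1 (hEsub he))
  have hadjE : ∀ a b : V, s(a,b) ∈ E → G.Adj a b := by
    intro a b hab
    exact (SimpleGraph.mem_edgeSet G).1 (SimpleGraph.mem_edgeFinset.1 (hEsub hab))
  have hdegE : ∀ u : V, (E.filter (fun e => u ∈ e)).card ≤ n := by
    intro u
    have hsub : E.filter (fun e => u ∈ e) ⊆ G.incidenceFinset u := by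
      intro e he
      rw [Finset.mem_filter] at he
      rw [mem_incidenceFinset]
      exact ⟨SimpleGraph.mem_edgeFinset.1 (hEsub he.1), he.2⟩
    calc (E.filter (fun e => u ∈ e)).card ≤ (G.incidenceFinset u).card :=
          Finset.card_le_card hsub
      _ = G.degree u := G.card_incidenceFinset_eq_degree u
      _ ≤ n := hdeg u
  have hcolminus : ∀ e₀ ∈ E, EColorable (E.erase e₀) n := by
    intro e₀ he₀
    by_contra hcon
    have hmem : E.erase e₀ ∈ P := Finset.mem_filter.2
      ⟨Finset.mem_powerset.2 ((Finset.erase_subset _ _).trans hEsub), hcon⟩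
    have := hmin _ hmem
    have := Finset.card_erase_of_mem he₀
    have := Finset.card_pos.2 ⟨e₀, he₀⟩
    omega
  -- k ≥ 1
  obtain ⟨e₀, he₀⟩ := hEne
  obtain ⟨x₀, y₀, rfl⟩ : ∃ a b, e₀ = s(a,b) := Sym2.inductionOn e₀ fun a b => ⟨a, b, rfl⟩
  have hadj₀ : G.Adj x₀ y₀ := hadjE _ _ he₀
  have hk1 : 1 ≤ k := by
    obtain ⟨v, hv, hvcard⟩ := hdegen {x₀, y₀} ⟨x₀, by simp⟩
    rw [Finset.mem_insert, Finset.mem_singleton] at hv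
    have : 1 ≤ (({x₀, y₀} : Finset V).filter (fun u => G.Adj v u)).card := by
      rcases hv with rfl | rfl
      · exact Finset.card_pos.2 ⟨y₀, Finset.mem_filter.2 ⟨by simp, hadj₀⟩⟩
      · exact Finset.card_pos.2 ⟨x₀, Finset.mem_filter.2 ⟨by simp, hadj₀.symm⟩⟩
    omega
  -- neighbor sets
  set NbrE : V → Finset V := fun u => Finset.univ.filter (fun z => s(u,z) ∈ E) with hNbrE
  have hNbrcard : ∀ u : V, (E.filter (fun e => u ∈ e)).card = (NbrE u).card := by
    intro u
    have himg : E.filter (fun e => u ∈ e) = (NbrE u).image (fun z => s(u,z)) := by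
      ext e
      rw [Finset.mem_filter, Finset.mem_image]
      constructor
      · rintro ⟨he, hue⟩
        obtain ⟨z, rfl⟩ := Sym2.mem_iff_exists.1 hue
        exact ⟨z, Finset.mem_filter.2 ⟨Finset.mem_univ _, he⟩, rfl⟩
      · rintro ⟨z, hz, rfl⟩
        rw [hNbrE] at hz
        simp only [Finset.mem_filter] at hz
        exact ⟨hz.2, Sym2.mem_mk_left _ _⟩
    rw [himg, Finset.card_image_of_injOn]
    intro a _ b _ hab
    exact Sym2.congr_right.1 hab
  set Hset := Finset.univ.filter (fun u => k + 1 ≤ (E.filter (fun e => u ∈ e)).card) with hHset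
  rcases Finset.eq_empty_or_nonempty Hset with hHe | hHne
  · -- no vertex of E-degree > k : apply VAL at any edge
    have hy₀k : (E.filter (fun e => y₀ ∈ e)).card ≤ k := by
      by_contra hcon
      have : y₀ ∈ Hset := Finset.mem_filter.2 ⟨Finset.mem_univ _, by omega⟩
      rw [hHe] at this
      exact absurd this (Finset.notMem_empty _)
    obtain ⟨T, hTcard, hT⟩ := val_lemma hND hdegE he₀ hEunc (hcolminus _ he₀)
    have hTne : T.Nonempty := by
      rw [← Finset.card_pos]
      omega
    obtain ⟨z, hz⟩ := hTne
    obtain ⟨hz1, hz2, hz3⟩ := hT z hz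
    have : z ∈ Hset := Finset.mem_filter.2 ⟨Finset.mem_univ _, by omega⟩
    rw [hHe] at this
    exact absurd this (Finset.notMem_empty _)
  · -- take a high vertex with few high neighbors
    obtain ⟨u, huH, hucard⟩ := hdegen Hset hHne
    have hudeg : k + 1 ≤ (E.filter (fun e => u ∈ e)).card := by
      rw [hHset, Finset.mem_filter] at huH
      exact huH.2
    -- u has a neighbor outside Hset
    have hnotall : ¬ (NbrE u ⊆ Hset.filter (fun z => G.Adj u z)) := by
      intro hcon
      have h1 := Finset.card_le_card hcon
      rw [← hNbrcard u] at h1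
      omega
    rw [Finset.not_subset] at hnotall
    obtain ⟨y₁, hy₁Nbr, hy₁notH⟩ := hnotall
    rw [hNbrE] at hy₁Nbr
    simp only [Finset.mem_filter] at hy₁Nbr
    have hy₁E : s(u, y₁) ∈ E := hy₁Nbr.2
    have hy₁adj : G.Adj u y₁ := hadjE _ _ hy₁E
    have hy₁deg : (E.filter (fun e => y₁ ∈ e)).card ≤ k := by
      by_contra hcon
      exact hy₁notH (Finset.mem_filter.2
        ⟨Finset.mem_filter.2 ⟨Finset.mem_univ _, by omega⟩, hy₁adj⟩)
    obtain ⟨T, hTcard, hT⟩ := val_lemma hND hdegE hy₁E hEunc (hcolminus _ hy₁E)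
    have hTsub : T ⊆ Hset.filter (fun z => G.Adj u z) := by
      intro z hz
      obtain ⟨hz1, hz2, hz3⟩ := hT z hz
      refine Finset.mem_filter.2 ⟨Finset.mem_filter.2 ⟨Finset.mem_univ _, by omega⟩, ?_⟩
      exact hadjE _ _ hz2
    have := Finset.card_le_card hTsub
    omega

section TreeDegeneracy

variable {ι : Type*} {T : SimpleGraph ι}

lemma path_length_eq_dist (hT : T.IsTree) {a b : ι} (p : T.Walk a b) (hp : p.IsPath) :
    p.length = T.dist a b := by
  refine le_antisymm ?_ (SimpleGraph.dist_le p)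
  obtain ⟨q, hq⟩ := hT.isConnected.exists_walk_length_eq_dist a b
  have hbypass : q.bypass = p := by
    have := hT.IsAcyclic.path_unique ⟨q.bypass, q.bypass_isPath⟩ ⟨p, hp⟩
    exact congrArg Subtype.val this
  calc p.length = q.bypass.length := by rw [hbypass]
    _ ≤ q.length := Walk.length_bypass_le q
    _ = T.dist a b := hq

lemma subdist (hT : T.IsTree) {r w : ι} (p : T.Walk r w) (hp : p.IsPath) {z : ι}
    (hz : z ∈ p.support) (hzw : z ≠ w) : T.dist r z < T.dist r w := by
  have htake : (p.takeUntil z hz).IsPath := hp.takeUntil hz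
  have hdz : T.dist r z = (p.takeUntil z hz).length :=
    (path_length_eq_dist hT _ htake).symm
  have hdw : T.dist r w = p.length := (path_length_eq_dist hT p hp).symm
  have hspec := Walk.take_spec p hz
  have hlen : (p.takeUntil z hz).length + (p.dropUntil z hz).length = p.length := by
    rw [← Walk.length_append, hspec]
  have hdrop : (p.dropUntil z hz).length ≠ 0 := by
    intro h0
    exact hzw (Walk.eq_of_length_eq_zero h0)
  omega

lemma treetop_aux (hT : T.IsTree) {r : ι} {S : Set ι} {m : ι}
    (hmin : ∀ t ∈ S, T.dist r m ≤ T.dist r t) :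
    ∀ {q t : ι} (W : T.Walk q t), (∀ z, z ∈ W.support → z ∈ S) →
      (∀ (p₀ : T.Walk r q), p₀.IsPath → m ∈ p₀.support) →
      ∀ (p₁ : T.Walk r t), p₁.IsPath → m ∈ p₁.support := by
  intro q t W
  induction W with
  | nil =>
    intro _ hq p₁ hp₁
    exact hq p₁ hp₁
  | @cons q q₁ t hadj W'' ih =>
    intro hWS' hq p₁ hp₁
    refine ih (fun z hz => hWS' z (by simp [hz])) ?_ p₁ hp₁
    -- CORE step: every r–q₁ path contains m
    intro p₀ hp₀
    have hqS : q ∈ S := hWS' q (by simp)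
    have hq₁S : q₁ ∈ S := hWS' q₁ (by simp)
    set w2 : T.Walk r q := (Walk.cons hadj p₀.reverse).reverse with hw2
    have hmw2 : m ∈ w2.bypass.support := hq w2.bypass w2.bypass_isPath
    have hsub := w2.support_bypass_subset hmw2
    rw [hw2, Walk.support_reverse] at hsub
    simp only [Walk.support_cons, List.mem_reverse, List.mem_cons] at hsub
    rcases hsub with rfl | hsub
    · by_cases hmem : m ∈ p₀.support
      · exact hmem
      · exfalso
        have hpath2 : w2.IsPath := by
          rw [hw2]
          apply Walk.IsPath.reverse
          rw [Walk.cons_isPath_iff]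
          refine ⟨hp₀.reverse, ?_⟩
          rwa [Walk.support_reverse, List.mem_reverse]
        have hq₁w2 : q₁ ∈ w2.support := by
          rw [hw2, Walk.support_reverse]
          simp only [Walk.support_cons, List.mem_reverse, List.mem_cons]
          right
          rw [Walk.support_reverse, List.mem_reverse]
          exact p₀.end_mem_support
        have hne : q₁ ≠ m := fun h => (h ▸ hadj).ne rfl
        have h1 := subdist hT w2 hpath2 hq₁w2 hne
        have h2 := hmin q₁ hq₁S
        omega
    · rw [Walk.support_reverse, List.mem_reverse] at hsub
      exact hsub

lemma treetop (hT : T.IsTree) (r : ι) (S : Set ι)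
    (hconnS : ∀ a ∈ S, ∀ b ∈ S, ∃ w : T.Walk a b, ∀ z, z ∈ w.support → z ∈ S)
    {m : ι} (hm : m ∈ S) (hmin : ∀ t ∈ S, T.dist r m ≤ T.dist r t)
    {t : ι} (ht : t ∈ S) (p : T.Walk r t) (hp : p.IsPath) : m ∈ p.support := by
  obtain ⟨W, hWS⟩ := hconnS m hm t ht
  exact treetop_aux hT hmin W hWS (fun p₀ _ => p₀.end_mem_support) p hp

end TreeDegeneracy

lemma degeneracy_of_htw {V : Type*} [Fintype V] [DecidableEq V] (G : SimpleGraph V)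
    [DecidableRel G.Adj] (k : ℕ)
    (htw : HasTreeDecompositionOfWidth G k) :
    ∀ S : Finset V, S.Nonempty → ∃ v ∈ S, (S.filter (fun u => G.Adj v u)).card ≤ k := by
  classical
  obtain ⟨ι, T, B, hT, hcover, hedge, hconn, hcard⟩ := htw
  have hne : Nonempty ι := hT.isConnected.nonempty
  set r : ι := Classical.arbitrary ι with hr
  have hconnS : ∀ v : V, ∀ a ∈ {t : ι | v ∈ B t}, ∀ b ∈ {t : ι | v ∈ B t},
      ∃ w : T.Walk a b, ∀ z, z ∈ w.support → z ∈ {t : ι | v ∈ B t} := by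
    intro v a ha b hb
    obtain ⟨w0⟩ := (hconn v).preconnected ⟨a, ha⟩ ⟨b, hb⟩
    refine ⟨w0.map (SimpleGraph.Embedding.induce {t : ι | v ∈ B t}).toHom, ?_⟩
    intro z hz
    replace hz : z ∈ (w0.map (SimpleGraph.Embedding.induce {t : ι | v ∈ B t}).toHom).support := hz
    rw [Walk.support_map, List.mem_map] at hz
    obtain ⟨z', _, rfl⟩ := hz
    exact z'.2
  have hm : ∀ v : V, ∃ t : ι, v ∈ B t ∧ ∀ t' : ι, v ∈ B t' → T.dist r t ≤ T.dist r t' := by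
    intro v
    obtain ⟨t₀, ht₀⟩ := hcover v
    have hAne : ((fun t => T.dist r t) '' {t : ι | v ∈ B t}).Nonempty := ⟨_, ⟨t₀, ht₀, rfl⟩⟩
    obtain ⟨t, htB, htd⟩ := Nat.sInf_mem hAne
    refine ⟨t, htB, ?_⟩
    intro t' ht'
    calc T.dist r t = sInf _ := htd
      _ ≤ T.dist r t' := Nat.sInf_le ⟨t', ht', rfl⟩
  choose m hmB hmMin using hm
  have key : ∀ u v : V, G.Adj u v → T.dist r (m u) ≤ T.dist r (m v) → u ∈ B (m v) := by
    intro u v hadj hle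
    obtain ⟨t, hut, hvt⟩ := hedge u v hadj
    obtain ⟨R, hR⟩ := (hT.existsUnique_path r t).exists
    have htopu : m u ∈ R.support :=
      treetop hT r {t' : ι | u ∈ B t'} (hconnS u) (hmB u)
        (fun t' ht' => hmMin u t' ht') hut R hR
    have htopv : m v ∈ R.support :=
      treetop hT r {t' : ι | v ∈ B t'} (hconnS v) (hmB v)
        (fun t' ht' => hmMin v t' ht') hvt R hR
    have hdroppath : (R.dropUntil (m u) htopu).IsPath := hR.dropUntil htopu
    have hmvdrop : m v ∈ (R.dropUntil (m u) htopu).support := by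
      by_contra hcon
      have hsplit := Walk.take_spec R htopu
      have hmem : m v ∈ ((R.takeUntil (m u) htopu).append (R.dropUntil (m u) htopu)).support := by
        rw [hsplit]; exact htopv
      rw [Walk.mem_support_append_iff] at hmem
      rcases hmem with h | h
      · have hne2 : m v ≠ m u := by
          intro hh
          rw [hh] at hcon
          exact hcon (R.dropUntil (m u) htopu).start_mem_support
        have h1 := subdist hT _ (hR.takeUntil htopu) h hne2
        omega
      · exact hcon h
    obtain ⟨W, hWS⟩ := hconnS u (m u) (hmB u) t hut
    have hdropW : R.dropUntil (m u) htopu = W.bypass := by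
      have := hT.IsAcyclic.path_unique ⟨_, hdroppath⟩ ⟨W.bypass, W.bypass_isPath⟩
      exact congrArg Subtype.val this
    have hmvW : m v ∈ W.support := by
      apply W.support_bypass_subset
      rw [← hdropW]
      exact hmvdrop
    exact hWS _ hmvW
  intro S hS
  obtain ⟨v, hvS, hvmax⟩ := Finset.exists_max_image S (fun v => T.dist r (m v)) hS
  refine ⟨v, hvS, ?_⟩
  have hsub : S.filter (fun u => G.Adj v u) ⊆ (B (m v)).erase v := by
    intro u hu
    rw [Finset.mem_filter] at hu
    refine Finset.mem_erase.2 ⟨hu.2.ne', ?_⟩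
    exact key u v hu.2.symm (hvmax u hu.1)
  have h1 := Finset.card_le_card hsub
  have h2 := Finset.card_erase_of_mem (hmB v)
  have h3 := hcard (m v)
  have h4 := Finset.card_pos.2 ⟨v, hmB v⟩
  omega

end VizingAux

/-- Vizing: Every graph `G` of treewidth at most `k` and maximum degree
`Δ(G) ≥ 2k` has chromatic index `χ'(G) = Δ(G)`. -/
theorem chromaticIndex_eq_maxDegree_of_treewidth_ge_two_k {V : Type*} [Fintype V]
    [DecidableEq V] (G : SimpleGraph V) [DecidableRel G.Adj] (k : ℕ)
    (htw : HasTreeDecompositionOfWidth G k) (hΔ : 2 * k ≤ G.maxDegree) :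
    chromaticIndex G = G.maxDegree := by
  classical
  set n := G.maxDegree with hn
  rw [chromaticIndex]
  set Sset := { m : ℕ | ∃ c : Sym2 V → ℕ,
    (∀ e ∈ G.edgeSet, c e < m) ∧
    (∀ e₁ ∈ G.edgeSet, ∀ e₂ ∈ G.edgeSet,
      e₁ ≠ e₂ → (∃ v : V, v ∈ e₁ ∧ v ∈ e₂) → c e₁ ≠ c e₂) } with hSset
  have hdegen := VizingAux.degeneracy_of_htw G k htw
  have hcol : VizingAux.EColorable G.edgeFinset n :=
    VizingAux.colorable_of_degeneracy G k n hΔ (fun u => G.degree_le_maxDegree u) hdegen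
  obtain ⟨c, hc1, hc2⟩ := hcol
  have hmem : n ∈ Sset := by
    refine ⟨c, ?_, ?_⟩
    · intro e he
      exact hc1 e (SimpleGraph.mem_edgeFinset.2 he)
    · intro e₁ he₁ e₂ he₂ hne hsh
      exact hc2 e₁ (SimpleGraph.mem_edgeFinset.2 he₁) e₂ (SimpleGraph.mem_edgeFinset.2 he₂) hne hsh
  have hlow : ∀ m ∈ Sset, n ≤ m := by
    intro m hm
    obtain ⟨c', hc1', hc2'⟩ := hm
    by_cases hV : Nonempty V
    · obtain ⟨x, hx⟩ := G.exists_maximal_degree_vertex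
      have hcardle : (G.incidenceFinset x).card ≤ (Finset.range m).card := by
        apply Finset.card_le_card_of_injOn c'
        · intro e he
          rw [Finset.mem_coe, SimpleGraph.mem_incidenceFinset] at he
          exact Finset.mem_coe.2 (Finset.mem_range.2 (hc1' e he.1))
        · intro e₁ he₁ e₂ he₂ heq
          by_contra hne
          rw [Finset.mem_coe, SimpleGraph.mem_incidenceFinset] at he₁ he₂
          exact hc2' e₁ he₁.1 e₂ he₂.1 hne ⟨x, he₁.2, he₂.2⟩ heq
      rw [SimpleGraph.card_incidenceFinset_eq_degree, Finset.card_range] at hcardle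
      rw [hn, hx]
      exact hcardle
    · have hzero : n ≤ 0 :=
        G.maxDegree_le_of_forall_degree_le 0 (fun v => absurd (Nonempty.intro v) hV)
      omega
  have h1 : sInf Sset ≤ n := Nat.sInf_le hmem
  have h2 : n ≤ sInf Sset := hlow _ (Nat.sInf_mem ⟨n, hmem⟩)
  omega
end

section
/- For positive integers c and r with 4 dividing c(2r + c + 1) and r² ≥ c, there exists a finite simple graph whose degree sequence is (c, c, ..., c, c−1, c−2, ..., 1), where c appears r+1 times (so the graph has c + r vertices). -/
open SimpleGraph Finset

namespace DegSeq

open Multiset SimpleGraph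


def Realizable (m : Multiset ℕ) : Prop :=
  ∃ (V : Type) (_ : Fintype V) (G : SimpleGraph V) (_ : DecidableRel G.Adj),
    (Finset.univ.val.map fun v => G.degree v) = m

lemma realizable_zero (k : ℕ) : Realizable (Multiset.replicate k 0) := by
  refine ⟨Fin k, inferInstance, ⊥, inferInstance, ?_⟩
  simp only [SimpleGraph.bot_degree, Multiset.map_const']
  congr 1
  simp

section
variable {V : Type} [Fintype V] [DecidableEq V]



def extend (G : SimpleGraph V) (S : Finset V) : SimpleGraph (Option V) where
  Adj x y := match x, y with
    | some a, some b => G.Adj a b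
    | some a, none => a ∈ S
    | none, some b => b ∈ S
    | none, none => False
  symm := by
    constructor
    rintro (_ | a) (_ | b) h
    · exact h
    · exact h
    · exact h
    · exact G.adj_symm h
  loopless := by
    constructor
    rintro (_ | a) h
    · exact h
    · exact G.loopless.irrefl a h

def extendDec (G : SimpleGraph V) [DecidableRel G.Adj] (S : Finset V) :
    DecidableRel (extend G S).Adj := fun x y =>
  match x, y with
  | some a, some b => inferInstanceAs (Decidable (G.Adj a b))
  | some a, none => inferInstanceAs (Decidable (a ∈ S))
  | none, some b => inferInstanceAs (Decidable (b ∈ S))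
  | none, none => inferInstanceAs (Decidable False)

lemma extend_adj_some_some (G : SimpleGraph V) (S : Finset V) (a b : V) :
    (extend G S).Adj (some a) (some b) ↔ G.Adj a b := Iff.rfl

attribute [local instance] extendDec

lemma nf_none (G : SimpleGraph V) [DecidableRel G.Adj] (S : Finset V) :
    (extend G S).neighborFinset none = S.map Function.Embedding.some := by
  ext x
  cases x with
  | none =>
      simp only [SimpleGraph.mem_neighborFinset, Finset.mem_map]
      constructor
      · exact fun h => h.elim
      · rintro ⟨x, _, hx⟩; cases hx
  | some b =>
      simp only [SimpleGraph.mem_neighborFinset, Finset.mem_map]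
      constructor
      · intro h; exact ⟨b, h, rfl⟩
      · rintro ⟨x, hx, hxe⟩
        cases Option.some_injective _ hxe
        exact hx

lemma deg_none (G : SimpleGraph V) [DecidableRel G.Adj] (S : Finset V) :
    (extend G S).degree none = S.card := by
  rw [SimpleGraph.degree, nf_none, Finset.card_map]

lemma nf_some (G : SimpleGraph V) [DecidableRel G.Adj] (S : Finset V) (a : V) :
    (extend G S).neighborFinset (some a) =
      (if a ∈ S then {(none : Option V)} else ∅) ∪ (G.neighborFinset a).map Function.Embedding.some := by
  ext x
  cases x with
  | none =>
      by_cases h : a ∈ S <;>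
        simp [SimpleGraph.mem_neighborFinset, h, extend_adj_some_some] <;> exact h
  | some b =>
      by_cases h : a ∈ S <;>
        simp [SimpleGraph.mem_neighborFinset, h, extend_adj_some_some]

lemma deg_some (G : SimpleGraph V) [DecidableRel G.Adj] (S : Finset V) (a : V) :
    (extend G S).degree (some a) = G.degree a + (if a ∈ S then 1 else 0) := by
  rw [SimpleGraph.degree, nf_some, Finset.card_union_of_disjoint, Finset.card_map]
  · by_cases h : a ∈ S
    · rw [if_pos h, if_pos h, Finset.card_singleton, SimpleGraph.degree, add_comm]
    · rw [if_neg h, if_neg h, Finset.card_empty, SimpleGraph.degree, zero_add, add_zero]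
  · by_cases h : a ∈ S
    · rw [if_pos h]
      simp only [Finset.disjoint_singleton_left, Finset.mem_map]
      rintro ⟨x, _, hx⟩; cases hx
    · rw [if_neg h]; exact Finset.disjoint_empty_left _




lemma exists_subset_map_eq (f : V → ℕ) :
    ∀ (ν : Multiset ℕ) (T : Finset V), ν ≤ T.val.map f →
      ∃ S : Finset V, S ⊆ T ∧ S.val.map f = ν := by
  intro ν
  induction ν using Multiset.induction_on with
  | empty => exact fun T _ => ⟨∅, by simp, by simp⟩
  | cons a ν ih =>
      intro T h
      have ha : a ∈ T.val.map f := Multiset.mem_of_le h (Multiset.mem_cons_self a ν)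
      obtain ⟨v, hvT, hfv⟩ := Multiset.mem_map.1 ha
      have hmap : T.val.map f = a ::ₘ (T.erase v).val.map f := by
        have h1 : T.val = v ::ₘ (T.erase v).val := by
          rw [Finset.erase_val]
          exact (Multiset.cons_erase hvT).symm
        rw [h1, Multiset.map_cons, hfv]
      have h2 : ν ≤ (T.erase v).val.map f := by
        have := Multiset.erase_le_erase a h
        rwa [Multiset.erase_cons_head, hmap, Multiset.erase_cons_head] at this
      obtain ⟨S', hS'T, hS'⟩ := ih (T.erase v) h2
      have hvS' : v ∉ S' := fun hmem => Finset.notMem_erase v T (hS'T hmem)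
      refine ⟨insert v S', ?_, ?_⟩
      · intro x hx
        rcases Finset.mem_insert.1 hx with rfl | hx
        · exact hvT
        · exact Finset.mem_of_mem_erase (hS'T hx)
      · rw [Finset.insert_val_of_notMem hvS', Multiset.map_cons, hfv, hS']




lemma univ_val_split (S : Finset V) :
    (Finset.univ : Finset V).val = (Finset.univ \ S).val + S.val := by
  rw [Finset.sdiff_val, tsub_add_cancel_of_le]
  exact Finset.val_le_iff.2 (Finset.subset_univ S)

lemma map_ite_split (f : V → ℕ) (S : Finset V) :
    (Finset.univ.val.map fun v => f v + (if v ∈ S then 1 else 0)) =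
      (Finset.univ \ S).val.map f + (S.val.map f).map (· + 1) := by
  rw [univ_val_split S, Multiset.map_add]
  congr 1
  · apply Multiset.map_congr rfl
    intro x hx
    have : x ∉ S := (Finset.mem_sdiff.1 hx).2
    simp [this]
  · rw [Multiset.map_map]
    apply Multiset.map_congr rfl
    intro x hx
    simp [show x ∈ S from hx]

end

/-- Key step: from a realization of `μ + ν`, add one new vertex adjacent to
vertices realizing `ν`; their degrees bump by one and the new vertex gets degree `ν.card`. -/
lemma realizable_step (μ ν : Multiset ℕ) (h : Realizable (μ + ν)) :
    Realizable (ν.card ::ₘ (μ + ν.map (· + 1))) := by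
  classical
  obtain ⟨V, hV, G, hG, hdeg⟩ := h
  letI := Classical.decEq V
  have hν : ν ≤ Finset.univ.val.map (fun v => G.degree v) := by
    rw [hdeg]; exact Multiset.le_add_left ν μ
  obtain ⟨S, -, hS⟩ := exists_subset_map_eq (fun v => G.degree v) ν Finset.univ
    (by simpa using hν)
  refine ⟨Option V, inferInstance, extend G S, extendDec G S, ?_⟩
  letI := extendDec G S
  have huniv : (Finset.univ : Finset (Option V)).val = none ::ₘ Finset.univ.val.map some := by
    rw [univ_option]
    rfl
  rw [huniv, Multiset.map_cons, Multiset.map_map]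
  have h1 : (extend G S).degree none = ν.card := by
    rw [deg_none]
    rw [← hS, Multiset.card_map]
    rfl
  have h2 : (Finset.univ.val.map fun v => (extend G S).degree (some v)) =
      μ + ν.map (· + 1) := by
    have : (fun v => (extend G S).degree (some v)) =
        fun v => G.degree v + (if v ∈ S then 1 else 0) := by
      funext v; exact deg_some G S v
    rw [this, map_ite_split, hS]
    congr 1
    have hsplit := univ_val_split (V := V) S
    have : (Finset.univ.val.map fun v => G.degree v) =
        (Finset.univ \ S).val.map (fun v => G.degree v) + S.val.map (fun v => G.degree v) := by
      rw [← Multiset.map_add, ← hsplit]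
    rw [this, hS] at hdeg
    exact add_right_cancel hdeg
  rw [h1]
  rw [show ((fun v => (extend G S).degree v) ∘ some) = (fun v => (extend G S).degree (some v)) from rfl]
  rw [h2]



def stair (ℓ s : ℕ) : Multiset ℕ := (Multiset.range s).map (· + ℓ)

def Fam (p q ℓ s : ℕ) : Multiset ℕ :=
  Multiset.replicate p (ℓ + s + 1) + Multiset.replicate q (ℓ + s) + stair ℓ s

@[simp] lemma stair_zero (ℓ : ℕ) : stair ℓ 0 = 0 := rfl

lemma range_succ_left (n : ℕ) :
    Multiset.range (n + 1) = 0 ::ₘ (Multiset.range n).map (· + 1) := by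
  have := List.range_succ_eq_map (n := n)
  rw [Multiset.range, this, Multiset.range]
  rfl

lemma stair_succ_right (ℓ s : ℕ) : stair ℓ (s + 1) = (ℓ + s) ::ₘ stair ℓ s := by
  rw [stair, Multiset.range_succ, Multiset.map_cons, add_comm s ℓ]
  rfl

lemma stair_succ_left (ℓ s : ℕ) : stair ℓ (s + 1) = ℓ ::ₘ stair (ℓ + 1) s := by
  rw [stair, range_succ_left, Multiset.map_cons, Multiset.map_map]
  congr 1
  · simp
  · rw [stair]
    apply Multiset.map_congr rfl
    intro x _
    simp [Function.comp]
    omega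

lemma stair_card (ℓ s : ℕ) : (stair ℓ s).card = s := by
  rw [stair, Multiset.card_map, Multiset.card_range]

lemma range_sum_two (s : ℕ) : 2 * (Multiset.range s).sum + s = s * s := by
  induction s with
  | zero => simp
  | succ t ih =>
      rw [Multiset.range_succ, Multiset.sum_cons]
      ring_nf
      ring_nf at ih
      omega

lemma stair_sum_two (ℓ s : ℕ) : 2 * (stair ℓ s).sum + s = 2 * (s * ℓ) + s * s := by
  induction s with
  | zero => simp
  | succ t ih =>
      rw [stair_succ_right, Multiset.sum_cons]
      ring_nf at ih ⊢
      omega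

lemma fam_sum_two (p q ℓ s : ℕ) :
    2 * (Fam p q ℓ s).sum + s = 2 * (p * (ℓ + s + 1) + q * (ℓ + s) + s * ℓ) + s * s := by
  rw [Fam, Multiset.sum_add, Multiset.sum_add, Multiset.sum_replicate, Multiset.sum_replicate,
    smul_eq_mul, smul_eq_mul]
  have h := stair_sum_two ℓ s
  ring_nf at h ⊢
  omega

lemma map_add_one_sum (ν : Multiset ℕ) : (ν.map (· + 1)).sum = ν.sum + ν.card := by
  induction ν using Multiset.induction_on with
  | empty => simp
  | cons a ν ih => simp [ih]; ring

@[simp] lemma fam_card (p q ℓ s : ℕ) : (Fam p q ℓ s).card = p + q + s := by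
  rw [Fam]
  simp [stair_card]


lemma fam_realizable (n : ℕ) : ∀ (p q ℓ s : ℕ), p + q + s = n → 1 ≤ q →
    ℓ + 1 ≤ p + q → (1 ≤ p → ℓ + 2 ≤ p + q) →
    Even (Fam p q ℓ s).sum →
    (p + q ≤ ℓ + s →
      2*p + 2*((ℓ+s+p+q)/2) + ℓ*ℓ + (p+q) ≤ (p+q)*(p+q) + ℓ) →
    Realizable (Fam p q ℓ s) := by
  induction n using Nat.strong_induction_on with
  | _ n IH =>
    intro p q ℓ s hn hq h4a h4b he h5
    rcases s with _ | t
    · -- s = 0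
      rcases ℓ with _ | m
      · -- ℓ = 0
        rcases Nat.eq_zero_or_pos p with hp | hp
        · -- terminal
          subst hp
          have : Fam 0 q 0 0 = Multiset.replicate q 0 := by
            simp [Fam, stair]
          rw [this]
          exact realizable_zero q
        · -- B1a : ℓ = 0, s = 0, 1 ≤ p
          have hfs := fam_sum_two p q 0 0
          have hp2 : 2 ≤ p := by
            obtain ⟨k, hk⟩ := he
            omega
          obtain ⟨P, hPd⟩ : ∃ P, p - 2 = P := ⟨_, rfl⟩
          have hP' : P + 2 = p := by omega
          have hY : Fam P (q+1) 0 0 =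
              (Multiset.replicate P 1 + Multiset.replicate q 0)
              + Multiset.replicate 1 0 := by
            rw [Fam, show (0:ℕ)+0+1 = 1 by omega, show (0:ℕ)+0 = 0 by omega, stair_zero,
              Multiset.replicate_add]
            abel
          have hX : Fam p q 0 0 = 1 ::ₘ
              ((Multiset.replicate P 1 + Multiset.replicate q 0)
               + Multiset.replicate 1 1) := by
            rw [Fam, show (0:ℕ)+0+1 = 1 by omega, show (0:ℕ)+0 = 0 by omega, stair_zero,
              show p = P + 1 + 1 by omega, Multiset.replicate_add, Multiset.replicate_add]
            simp only [← Multiset.singleton_add, Multiset.replicate_one]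
            abel
          have hsum : (Fam p q 0 0).sum = (Fam P (q+1) 0 0).sum + 2 := by
            rw [hX, hY, Multiset.sum_cons]
            simp only [Multiset.sum_add, Multiset.sum_replicate, smul_eq_mul]
            omega
          have hreal : Realizable (Fam P (q+1) 0 0) := by
            refine IH (n-1) (by omega) P (q+1) 0 0 (by omega) (by omega) (by omega) ?_ ?_ ?_
            · intro h1; omega
            · obtain ⟨k, hk⟩ := he
              exact ⟨k - 1, by omega⟩
            · intro htr; omega
          have hstep := realizable_step _ (Multiset.replicate 1 0)
            (by rw [← hY]; exact hreal)
          rw [Multiset.card_replicate, Multiset.map_replicate,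
            show (0:ℕ)+1 = 1 by omega] at hstep
          rw [hX]
          exact hstep
      · -- ℓ = m+1, s = 0
        by_cases hlp : m + 1 ≤ p
        · -- B1 : ℓ = m+1 ≤ p, s = 0
          have h4b0 := h4b (by omega)
          obtain ⟨P, hPd⟩ : ∃ P, p - (m+1) = P := ⟨_, rfl⟩
          have hP' : P + (m+1) = p := by omega
          obtain ⟨Q, hQd⟩ : ∃ Q, q - 1 = Q := ⟨_, rfl⟩
          have hQ' : Q + 1 = q := by omega
          have hY : Fam P (q+m) (m+1) 0 =
              (Multiset.replicate P (m+2) + Multiset.replicate Q (m+1))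
              + Multiset.replicate (m+1) (m+1) := by
            rw [Fam, show m+1+0+1 = m+2 by omega, show m+1+0 = m+1 by omega, stair_zero,
              show q+m = Q+(m+1) by omega, Multiset.replicate_add]
            abel
          have hX : Fam p q (m+1) 0 = (m+1) ::ₘ
              ((Multiset.replicate P (m+2) + Multiset.replicate Q (m+1))
               + Multiset.replicate (m+1) (m+2)) := by
            rw [Fam, show m+1+0+1 = m+2 by omega, show m+1+0 = m+1 by omega, stair_zero,
              show p = P + (m+1) by omega, Multiset.replicate_add,
              show q = Q + 1 by omega, Multiset.replicate_add]
            simp only [← Multiset.singleton_add, Multiset.replicate_one]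
            abel
          have hsum : (Fam p q (m+1) 0).sum = (Fam P (q+m) (m+1) 0).sum + 2*(m+1) := by
            rw [hX, hY, Multiset.sum_cons]
            simp only [Multiset.sum_add, Multiset.sum_replicate, smul_eq_mul]
            have e1 : (m+1)*(m+2) = (m+1)*(m+1) + (m+1) := by ring
            omega
          have h4b' : 1 ≤ P → m+4 ≤ p+q := by
            intro h1
            by_contra hcon
            push_neg at hcon
            have hp3 : p = m+2 := by omega
            have hq1 : q = 1 := by omega
            subst hp3 hq1
            obtain ⟨k, hk⟩ := he
            have hfs := fam_sum_two (m+2) 1 (m+1) 0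
            have e1 : (m+2)*(m+1+0+1) = m*m+4*m+4 := by ring
            have e2 : 1*(m+1+0) = m+1 := by ring
            have epar : Even (m*m + m) := by
              have := Nat.even_mul_succ_self m
              rwa [show m*(m+1) = m*m+m by ring] at this
            obtain ⟨j, hj⟩ := epar
            omega
          have hreal : Realizable (Fam P (q+m) (m+1) 0) := by
            refine IH (n-1) (by omega) P (q+m) (m+1) 0 (by omega) (by omega) ?_ ?_ ?_ ?_
            · omega
            · intro h1
              have := h4b' (by omega)
              omega
            · obtain ⟨k, hk⟩ := he
              exact ⟨k - (m+1), by omega⟩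
            · intro htr; omega
          have hstep := realizable_step _ (Multiset.replicate (m+1) (m+1))
            (by rw [← hY]; exact hreal)
          rw [Multiset.card_replicate, Multiset.map_replicate,
            show (m+1)+1 = m+2 by omega] at hstep
          rw [hX]
          exact hstep
        · -- B2 : ℓ = m+1, p < ℓ, s = 0
          obtain ⟨A, hA⟩ : ∃ A, p+q-(m+2) = A := ⟨_, rfl⟩
          obtain ⟨B, hB⟩ : ∃ B, m+1-p = B := ⟨_, rfl⟩
          have hA' : A + (m+2) = p + q := by omega
          have hB' : B + p = m+1 := by omega
          have hY : Fam (A+p) B m 0 =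
              (Multiset.replicate A (m+1))
              + (Multiset.replicate p (m+1) + Multiset.replicate B m) := by
            rw [Fam, show m+0+1 = m+1 by omega, show m+0 = m by omega, stair_zero,
              Multiset.replicate_add]
            abel
          have hX : Fam p q (m+1) 0 = (m+1) ::ₘ
              ((Multiset.replicate A (m+1))
               + (Multiset.replicate p (m+2) + Multiset.replicate B (m+1))) := by
            rw [Fam, show m+1+0+1 = m+2 by omega, show m+1+0 = m+1 by omega, stair_zero,
              show q = A + (B + 1) by omega, Multiset.replicate_add, Multiset.replicate_add]
            simp only [← Multiset.singleton_add, Multiset.replicate_one]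
            abel
          have hsum : (Fam p q (m+1) 0).sum = (Fam (A+p) B m 0).sum + 2*(m+1) := by
            rw [hX, hY, Multiset.sum_cons]
            simp only [Multiset.sum_add, Multiset.sum_replicate, smul_eq_mul]
            have e1 : p*(m+2) = p*(m+1) + p := by ring
            have e2 : B*(m+1) = B*m + B := by ring
            omega
          have h4b' : 1 ≤ A+p → m+3 ≤ p+q := by
            intro h1
            rcases Nat.eq_zero_or_pos p with hp0 | hp0
            · omega
            · have := h4b hp0
              omega
          have hreal : Realizable (Fam (A+p) B m 0) := by
            refine IH (n-1) (by omega) (A+p) B m 0 (by omega) (by omega) ?_ ?_ ?_ ?_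
            · omega
            · intro h1
              have := h4b' (by omega)
              omega
            · obtain ⟨k, hk⟩ := he
              exact ⟨k - (m+1), by omega⟩
            · intro htr; omega
          have hstep := realizable_step _
            (Multiset.replicate p (m+1) + Multiset.replicate B m)
            (by rw [← hY]; exact hreal)
          rw [Multiset.card_add, Multiset.card_replicate, Multiset.card_replicate,
            show p + B = m+1 by omega, Multiset.map_add, Multiset.map_replicate,
            Multiset.map_replicate, show (m+1)+1 = m+2 by omega,
            show m+1 = m+1 by omega] at hstep
          rw [hX]
          exact hstep
    · -- s = t+1
      rcases ℓ with _ | m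
      · -- A0 : ℓ = 0, s = t+1
        have hX : Fam p q 0 (t+1) = (0 : Multiset ℕ).card ::ₘ (Fam p q 1 t + (0 : Multiset ℕ).map (· + 1)) := by
          simp only [Multiset.card_zero, Multiset.map_zero, add_zero]
          rw [Fam, Fam, stair_succ_left, show 0+(t+1)+1 = 1+t+1 by omega,
            show 0+(t+1) = 1+t by omega, show (0:ℕ)+1 = 1 by omega]
          simp only [← Multiset.singleton_add, Multiset.replicate_one]
          abel
        have hsum : (Fam p q 0 (t+1)).sum = (Fam p q 1 t).sum := by
          rw [hX]; simp
        have h4a' : 2 ≤ p + q := by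
          by_contra hcon
          push_neg at hcon
          have hF : p + q = 1 := by omega
          have h5x := h5 (by omega)
          rw [hF] at h5x
          omega
        have h4b' : 1 ≤ p → 3 ≤ p + q := by
          intro hp1
          by_contra hcon
          push_neg at hcon
          have hF : p + q = 2 := by omega
          rcases Nat.eq_zero_or_pos t with ht | ht
          · subst ht
            obtain ⟨k, hk⟩ := he
            have hfs := fam_sum_two p q 0 (0+1)
            omega
          · have h5x := h5 (by omega)
            rw [hF] at h5x
            omega
        have hreal : Realizable (Fam p q 1 t) := by
          refine IH (p+q+t) (by omega) p q 1 t rfl hq (by omega) (by intro hp1; have := h4b' hp1; omega) ?_ ?_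
          · obtain ⟨k, hk⟩ := he
            exact ⟨k, by omega⟩
          · intro htr
            have h5x := h5 (by omega)
            omega
        have hstep := realizable_step (Fam p q 1 t) 0 (by rwa [add_zero])
        rw [hX]
        exact hstep
      · by_cases hlp : m + 1 ≤ p
        · -- A1 : ℓ = m+1 ≤ p, s = t+1
          have hY : Fam (p-(m+1)) (q+(m+1)) (m+2) t =
              (Multiset.replicate (p-(m+1)) (m+t+3) + Multiset.replicate q (m+t+2) + stair (m+2) t)
              + Multiset.replicate (m+1) (m+t+2) := by
            rw [Fam, show m+2+t+1 = m+t+3 by omega, show m+2+t = m+t+2 by omega,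
              Multiset.replicate_add]
            abel
          have hX : Fam p q (m+1) (t+1) = (m+1) ::ₘ
              ((Multiset.replicate (p-(m+1)) (m+t+3) + Multiset.replicate q (m+t+2) + stair (m+2) t)
               + Multiset.replicate (m+1) (m+t+3)) := by
            rw [Fam, show m+1+(t+1)+1 = m+t+3 by omega, show m+1+(t+1) = m+t+2 by omega,
              stair_succ_left, show m+1+1 = m+2 by omega]
            generalize hP : p - (m+1) = P
            rw [show p = P + (m+1) by omega, Multiset.replicate_add]
            simp only [← Multiset.singleton_add, Multiset.replicate_one]
            abel
          have hsum : (Fam p q (m+1) (t+1)).sum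
              = (Fam (p-(m+1)) (q+(m+1)) (m+2) t).sum + 2*(m+1) := by
            rw [hX, hY, Multiset.sum_cons]
            simp only [Multiset.sum_add, Multiset.sum_replicate, smul_eq_mul]
            ring
          have h4b0 := h4b (by omega)
          have h4b' : 1 ≤ p-(m+1) → m+4 ≤ p+q := by
            intro hp1
            by_contra hcon
            push_neg at hcon
            have hp2 : p = m+2 := by omega
            have hq1 : q = 1 := by omega
            rcases Nat.eq_zero_or_pos t with ht | ht
            · subst ht hp2 hq1
              obtain ⟨k, hk⟩ := he
              have hfs := fam_sum_two (m+2) 1 (m+1) (0+1)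
              have e1 : (m+2) * (m+1+(0+1)+1) = m*m + 5*m + 6 := by ring
              have e2 : 1 * (m+1+(0+1)) = m + 2 := by ring
              have e3 : (0+1) * (m+1) = m+1 := by ring
              have e5 : Even (m*m + m) := by
                have := Nat.even_mul_succ_self m
                rwa [show m*(m+1) = m*m+m by ring] at this
              obtain ⟨j, hj⟩ := e5
              omega
            · have h5x := h5 (by omega)
              have hF : p + q = m+3 := by omega
              rw [hF] at h5x
              have e1 : (m+3)*(m+3) = (m+1)*(m+1) + 4*m+8 := by ring
              omega
          have hreal : Realizable (Fam (p-(m+1)) (q+(m+1)) (m+2) t) := by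
            refine IH (n-1) (by omega) _ _ _ _ (by omega) (by omega) ?_ ?_ ?_ ?_
            · have hFsum : (p-(m+1)) + (q+(m+1)) = p + q := by omega
              rw [hFsum]; omega
            · intro hp1
              have := h4b' hp1
              have hFsum : (p-(m+1)) + (q+(m+1)) = p + q := by omega
              rw [hFsum]; omega
            · obtain ⟨k, hk⟩ := he
              exact ⟨k - (m+1), by omega⟩
            · have hFsum : (p-(m+1)) + (q+(m+1)) = p + q := by omega
              rw [hFsum]
              intro htr
              have h5x := h5 (by omega)
              have e1 : (m+2)*(m+2) = (m+1)*(m+1) + 2*m+3 := by ring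
              omega
          have hstep := realizable_step _ (Multiset.replicate (m+1) (m+t+2)) (by rw [← hY]; exact hreal)
          rw [Multiset.card_replicate, Multiset.map_replicate,
            show (m+t+2)+1 = m+t+3 by omega] at hstep
          rw [hX]
          exact hstep
        · rcases t with _ | u
          · -- A3 : ℓ = m+1, p < ℓ, s = 0+1
            obtain ⟨A, hA⟩ : ∃ A, p+q-(m+1) = A := ⟨_, rfl⟩
            obtain ⟨B, hB⟩ : ∃ B, m+1-p = B := ⟨_, rfl⟩
            have hA' : A + (m+1) = p + q := by omega
            have hB' : B + p = m+1 := by omega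
            have hY : Fam (A+p) B (m+1) 0 =
                (Multiset.replicate A (m+2))
                + (Multiset.replicate p (m+2) + Multiset.replicate B (m+1)) := by
              rw [Fam, show m+1+0+1 = m+2 by omega, show m+1+0 = m+1 by omega,
                Multiset.replicate_add, stair_zero]
              abel
            have hX : Fam p q (m+1) (0+1) = (m+1) ::ₘ
                ((Multiset.replicate A (m+2))
                 + (Multiset.replicate p (m+3) + Multiset.replicate B (m+2))) := by
              rw [Fam, show m+1+(0+1)+1 = m+3 by omega, show m+1+(0+1) = m+2 by omega,
                stair_succ_right, stair_zero, show m+1+0 = m+1 by omega,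
                show q = A + B by omega, Multiset.replicate_add]
              simp only [← Multiset.singleton_add, Multiset.replicate_one]
              abel
            have hsum : (Fam p q (m+1) (0+1)).sum
                = (Fam (A+p) B (m+1) 0).sum + 2*(m+1) := by
              rw [hX, hY, Multiset.sum_cons]
              simp only [Multiset.sum_add, Multiset.sum_replicate, smul_eq_mul]
              have e1 : p*(m+3) = p*(m+2) + p := by ring
              have e2 : B*(m+2) = B*(m+1) + B := by ring
              omega
            have h4b' : 1 ≤ A+p → m+3 ≤ p+q := by
              intro hap
              rcases Nat.eq_zero_or_pos p with hp0 | hp0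
              · by_contra hcon
                push_neg at hcon
                have hF : p + q = m+2 := by omega
                have h5x := h5 (by omega)
                rw [hF] at h5x
                have e1 : (m+2)*(m+2) = (m+1)*(m+1) + 2*m+3 := by ring
                omega
              · have := h4b hp0
                omega
            have hreal : Realizable (Fam (A+p) B (m+1) 0) := by
              refine IH (n-1) (by omega) (A+p) B (m+1) 0 (by omega) (by omega) ?_ ?_ ?_ ?_
              · omega
              · intro h1
                have := h4b' (by omega)
                omega
              · obtain ⟨k, hk⟩ := he
                exact ⟨k - (m+1), by omega⟩
              · intro htr
                omega
            have hstep := realizable_step _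
              (Multiset.replicate p (m+2) + Multiset.replicate B (m+1))
              (by rw [← hY]; exact hreal)
            rw [Multiset.card_add, Multiset.card_replicate, Multiset.card_replicate,
              show p + B = m+1 by omega, Multiset.map_add, Multiset.map_replicate,
              Multiset.map_replicate, show (m+2)+1 = m+3 by omega,
              show (m+1)+1 = m+2 by omega] at hstep
            rw [hX]
            exact hstep
          · -- A2 : ℓ = m+1, p < ℓ, s = u+2
            obtain ⟨A, hA⟩ : ∃ A, p+q-(m+1) = A := ⟨_, rfl⟩
            obtain ⟨B, hB⟩ : ∃ B, m+1-p = B := ⟨_, rfl⟩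
            have hA' : A + (m+1) = p + q := by omega
            have hB' : B + p = m+1 := by omega
            have hY : Fam (A+p) (1+B) (m+2) u =
                (Multiset.replicate A (m+u+3) + {m+u+2} + stair (m+2) u)
                + (Multiset.replicate p (m+u+3) + Multiset.replicate B (m+u+2)) := by
              rw [Fam, show m+2+u+1 = m+u+3 by omega, show m+2+u = m+u+2 by omega,
                Multiset.replicate_add, Multiset.replicate_add]
              simp only [← Multiset.singleton_add, Multiset.replicate_one]
              abel
            have hX : Fam p q (m+1) (u+1+1) = (m+1) ::ₘ
                ((Multiset.replicate A (m+u+3) + {m+u+2} + stair (m+2) u)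
                 + (Multiset.replicate p (m+u+4) + Multiset.replicate B (m+u+3))) := by
              rw [Fam, show m+1+(u+1+1)+1 = m+u+4 by omega, show m+1+(u+1+1) = m+u+3 by omega,
                stair_succ_left, show m+1+1 = m+2 by omega,
                stair_succ_right, show m+2+u = m+u+2 by omega,
                show q = A + B by omega, Multiset.replicate_add]
              simp only [← Multiset.singleton_add, Multiset.replicate_one]
              abel
            have hsum : (Fam p q (m+1) (u+1+1)).sum
                = (Fam (A+p) (1+B) (m+2) u).sum + 2*(m+1) := by
              rw [hX, hY, Multiset.sum_cons]
              simp only [Multiset.sum_add, Multiset.sum_replicate, smul_eq_mul,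
                Multiset.sum_singleton]
              have e1 : p*(m+u+4) = p*(m+u+3) + p := by ring
              have e2 : B*(m+u+3) = B*(m+u+2) + B := by ring
              omega
            have h4b' : 1 ≤ A+p → m+3 ≤ p+q := by
              intro hap
              rcases Nat.eq_zero_or_pos p with hp0 | hp0
              · by_contra hcon
                push_neg at hcon
                have hF : p + q = m+2 := by omega
                have h5x := h5 (by omega)
                rw [hF] at h5x
                have e1 : (m+2)*(m+2) = (m+1)*(m+1) + 2*m+3 := by ring
                omega
              · have := h4b hp0
                omega
            have hreal : Realizable (Fam (A+p) (1+B) (m+2) u) := by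
              refine IH (n-1) (by omega) (A+p) (1+B) (m+2) u (by omega) (by omega) ?_ ?_ ?_ ?_
              · omega
              · intro h1
                have := h4b' (by omega)
                omega
              · obtain ⟨k, hk⟩ := he
                exact ⟨k - (m+1), by omega⟩
              · have hFs : (A+p) + (1+B) = p+q+1 := by omega
                rw [hFs]
                intro htr
                have h5x := h5 (by omega)
                have eF : (p+q+1)*(p+q+1) = (p+q)*(p+q) + 2*(p+q) + 1 := by ring
                have eL : (m+2)*(m+2) = (m+1)*(m+1) + 2*m+3 := by ring
                omega
            have hstep := realizable_step _
              (Multiset.replicate p (m+u+3) + Multiset.replicate B (m+u+2))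
              (by rw [← hY]; exact hreal)
            rw [Multiset.card_add, Multiset.card_replicate, Multiset.card_replicate,
              show p + B = m+1 by omega, Multiset.map_add, Multiset.map_replicate,
              Multiset.map_replicate, show (m+u+3)+1 = m+u+4 by omega,
              show (m+u+2)+1 = m+u+3 by omega] at hstep
            rw [hX]
            exact hstep


lemma target_eq (r d : ℕ) :
    Fam 0 (r+1) 1 d = Multiset.replicate (r+1) (d+1) + (Multiset.range d).map (· + 1) := by
  rw [Fam, show 1+d+1 = d+2 by omega, show 1+d = d+1 by omega, Multiset.replicate_zero, stair]
  rw [zero_add]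

end DegSeq

/-- For positive integers `c` and `r` with `4 ∣ c(2r + c + 1)` and
`r² ≥ c`, there exists a finite simple graph (on `c + r` vertices) whose degree
sequence is `(c, …, c, c−1, c−2, …, 1)` with `c` appearing `r + 1` times. -/
theorem exists_graph_with_degree_sequence (c r : ℕ) (hc : 0 < c) (hr : 0 < r)
    (h4 : 4 ∣ c * (2 * r + c + 1)) (hrc : c ≤ r ^ 2) :
    ∃ (V : Type) (_ : Fintype V) (G : SimpleGraph V) (_ : DecidableRel G.Adj),
      Fintype.card V = c + r ∧
      (Finset.univ.val.map fun v => G.degree v)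
        = Multiset.replicate (r + 1) c + (Multiset.range (c - 1)).map (· + 1) := by
  obtain ⟨d, rfl⟩ : ∃ d, c = d + 1 := ⟨c - 1, by omega⟩
  obtain ⟨k, hk⟩ := h4
  have hreal : DegSeq.Realizable (DegSeq.Fam 0 (r+1) 1 d) := by
    refine DegSeq.fam_realizable (0 + (r+1) + d) 0 (r+1) 1 d rfl (by omega) (by omega)
      (by omega) ?_ ?_
    · have hfs := DegSeq.fam_sum_two 0 (r+1) 1 d
      have e1 : (d+1)*(2*r+(d+1)+1) = 2*(d*r) + 2*r + d*d + 3*d + 2 := by ring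
      have e2 : (r+1)*(1+d) = d*r + r + d + 1 := by ring
      exact ⟨k, by omega⟩
    · intro htr
      have e0 : r^2 = r*r := by ring
      rw [e0] at hrc
      have eF : (0+(r+1))*(0+(r+1)) = r*r + 2*r + 1 := by ring
      have epar : Even (r*r + r) := by
        have := Nat.even_mul_succ_self r
        rwa [show r*(r+1) = r*r+r by ring] at this
      obtain ⟨j, hj⟩ := epar
      omega
  rw [DegSeq.target_eq] at hreal
  obtain ⟨V, hV, G, hdec, hdeg⟩ := hreal
  refine ⟨V, hV, G, hdec, ?_, ?_⟩
  · have hcard := congrArg Multiset.card hdeg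
    rw [Multiset.card_map] at hcard
    have : (Finset.univ : Finset V).val.card = Fintype.card V := rfl
    rw [this] at hcard
    simp only [Multiset.card_add, Multiset.card_replicate, Multiset.card_map,
      Multiset.card_range] at hcard
    omega
  · rw [hdeg, show d+1-1 = d by omega]
end

section
/- For positive integers c, r with r² ≥ c and 4 | c(2r+c+1), the sequence d = (c,...,c, c−1, ..., 1) with c occurring r+1 times satisfies the Erdős–Gallai conditions: the sum of entries is even, and for each ℓ, the sum of the first ℓ entries is at most ℓ(ℓ−1) plus the sum over the remaining entries d_i of min(d_i, ℓ). -/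
open Finset

/-- Gauss-type closed form for sums of truncated values. -/
lemma eg_key (m : ℕ) : ∀ n : ℕ, 2 * ∑ k ∈ Finset.range n, min (k + 1) m =
    if n ≤ m then n * (n + 1) else m * (m + 1) + 2 * m * (n - m) := by
  intro n
  induction n with
  | zero => simp
  | succ n ih =>
    rw [Finset.sum_range_succ, Nat.mul_add]
    rcases le_or_gt (n + 1) m with h | h
    · rw [if_pos h, if_pos (by omega)] at *
      rw [ih]
      have : min (n + 1) m = n + 1 := by omega
      rw [this]; ring
    · rw [if_neg (by omega)]
      have hmin : min (n + 1) m = m := by omega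
      rw [hmin]
      rcases le_or_gt n m with h2 | h2
      · have : n = m := by omega
        subst this
        rw [if_pos le_rfl] at ih
        rw [ih]
        have : n + 1 - n = 1 := by omega
        rw [this]; ring
      · rw [if_neg (by omega)] at ih
        rw [ih]
        have h3 : n + 1 - m = (n - m) + 1 := by omega
        rw [h3]; ring

lemma eg_reindex (f : ℕ → ℕ) (ℓ N : ℕ) (h : ℓ ≤ N) :
    ∑ i ∈ Finset.Ico ℓ N, f (N - i) = ∑ k ∈ Finset.range (N - ℓ), f (k + 1) := by
  rw [Finset.sum_Ico_eq_sum_range]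
  set n := N - ℓ with hn
  rw [← Finset.sum_range_reflect (fun k => f (k + 1)) n]
  apply Finset.sum_congr rfl
  intro k hk
  rw [Finset.mem_range] at hk
  congr 1
  omega

lemma eg_br_a (c r l n S T : ℤ) (hr : 1 ≤ r) (hrc : c ≤ r^2)
    (hpar : 2*l = c + r + 1 → c + 1 ≤ r^2)
    (hn : n = c + r - l) (h2 : n ≤ l)
    (hS : 2*S + n*(n+1) = c*(c+1) + 2*c*r)
    (hT : 2*T = n*(n+1)) :
    2*S ≤ 2*(l*(l-1)) + 2*T := by
  have ht : 2*l = c + r ∨ 2*l = c+r+1 ∨ c+r+2 ≤ 2*l := by omega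
  rcases ht with h | h | h
  · nlinarith
  · have := hpar h; nlinarith
  · nlinarith [mul_nonneg (by linarith : (0:ℤ) ≤ 2*l - c - r)
      (by linarith : (0:ℤ) ≤ 2*l - c - r - 2)]

lemma eg_br_b (c r l n S T : ℤ) (hr : 1 ≤ r) (hrc : c ≤ r^2)
    (hn : n = c + r - l) (h1 : n ≤ c) (h2 : l < n)
    (hS : 2*S + n*(n+1) = c*(c+1) + 2*c*r)
    (hT : 2*T = l*(l+1) + 2*l*(n-l)) :
    2*S ≤ 2*(l*(l-1)) + 2*T := by
  nlinarith

lemma eg_br_c1 (c r l n S T : ℤ) (hr : 1 ≤ r) (hc : 1 ≤ c)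
    (hn : n = c + r - l) (h1 : c < n) (hcl : c ≤ l)
    (hS : 2*S + (c*(c+1) + 2*c*(n-c)) = c*(c+1) + 2*c*r)
    (hT : 2*T = c*(c+1) + 2*c*(n-c)) :
    2*S ≤ 2*(l*(l-1)) + 2*T := by
  nlinarith [sq_nonneg (l - c)]

lemma eg_br_c2 (c r l n S T : ℤ) (hr : 1 ≤ r) (hc : 1 ≤ c) (hl : 0 ≤ l)
    (hn : n = c + r - l) (h1 : c < n)
    (hS : 2*S + (c*(c+1) + 2*c*(n-c)) = c*(c+1) + 2*c*r)
    (hT : 2*T = l*(l+1) + 2*l*(n-l)) :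
    2*S ≤ 2*(l*(l-1)) + 2*T := by
  nlinarith [mul_nonneg hl (by linarith : (0:ℤ) ≤ 2*r - l - 1)]

/-- For positive integers `c`, `r` with `r² ≥ c` and `4 ∣ c(2r+c+1)`, the
nonincreasing sequence `d = (c, …, c, c−1, …, 1)` (with `c` occurring `r+1` times, total
length `c + r`; at 0-indexed position `i` the entry is `min c (c + r − i)`) satisfies the
Erdős–Gallai conditions: the total sum is even, and for each `ℓ ≤ c + r` the sum of the
first `ℓ` entries is at most `ℓ(ℓ−1)` plus the sum over the remaining entries `dᵢ` of
`min dᵢ ℓ`. -/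
theorem erdos_gallai_conditions_for_sequence (c r : ℕ) (hc : 0 < c) (hr : 0 < r)
    (h4 : 4 ∣ c * (2 * r + c + 1)) (hrc : c ≤ r ^ 2) :
    (Even (∑ i ∈ Finset.range (c + r), min c (c + r - i))) ∧
    ∀ ℓ ≤ c + r,
      ∑ i ∈ Finset.range ℓ, min c (c + r - i)
        ≤ ℓ * (ℓ - 1) + ∑ i ∈ Finset.Ico ℓ (c + r), min (min c (c + r - i)) ℓ := by
  have htot : 2 * ∑ i ∈ Finset.range (c + r), min c (c + r - i)
      = c * (c + 1) + 2 * c * r := by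
    rw [Finset.range_eq_Ico]
    rw [show (∑ i ∈ Finset.Ico 0 (c + r), min c (c + r - i))
        = ∑ i ∈ Finset.Ico 0 (c + r), min (c + r - i) c from
      Finset.sum_congr rfl (fun i _ => min_comm _ _)]
    rw [eg_reindex (fun x => min x c) 0 (c + r) (Nat.zero_le _)]
    rw [eg_key c (c + r - 0)]
    have h1 : ¬ (c + r - 0 ≤ c) := by omega
    rw [if_neg h1]
    have h2 : c + r - 0 - c = r := by omega
    rw [h2]
  constructor
  · obtain ⟨k, hk⟩ := h4
    have h2T : 2 * ∑ i ∈ Finset.range (c + r), min c (c + r - i) = 4 * k := by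
      rw [htot, show c * (c + 1) + 2 * c * r = c * (2 * r + c + 1) from by ring, hk]
    exact ⟨k, by omega⟩
  · intro ℓ hℓ
    set N := c + r with hN
    set n := N - ℓ with hn
    set m := min c ℓ with hm
    set S := ∑ i ∈ Finset.range ℓ, min c (N - i) with hS
    set TA := ∑ i ∈ Finset.Ico ℓ N, min c (N - i) with hTA
    set TB := ∑ i ∈ Finset.Ico ℓ N, min (min c (N - i)) ℓ with hTB
    have hsplit : S + TA = ∑ i ∈ Finset.range N, min c (N - i) :=
      Finset.sum_range_add_sum_Ico _ hℓ
    have h2S : 2 * S + 2 * TA = c * (c + 1) + 2 * c * r := by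
      rw [← htot, ← hsplit]; ring
    have htail : 2 * TA
        = if n ≤ c then n * (n + 1) else c * (c + 1) + 2 * c * (n - c) := by
      rw [hTA, show (∑ i ∈ Finset.Ico ℓ N, min c (N - i))
          = ∑ i ∈ Finset.Ico ℓ N, min (N - i) c from
        Finset.sum_congr rfl (fun i _ => min_comm _ _)]
      rw [eg_reindex (fun x => min x c) ℓ N hℓ, eg_key c (N - ℓ)]
    have hT : 2 * TB
        = if n ≤ m then n * (n + 1) else m * (m + 1) + 2 * m * (n - m) := by
      rw [hTB, show (∑ i ∈ Finset.Ico ℓ N, min (min c (N - i)) ℓ)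
          = ∑ i ∈ Finset.Ico ℓ N, min (N - i) m from
        Finset.sum_congr rfl (fun i _ => by rw [hm]; omega)]
      rw [eg_reindex (fun x => min x m) ℓ N hℓ, eg_key m (N - ℓ)]
    have hgoal : 2 * S ≤ 2 * (ℓ * (ℓ - 1)) + 2 * TB → S ≤ ℓ * (ℓ - 1) + TB := by
      omega
    apply hgoal
    -- common cast facts
    have hrZ : (1 : ℤ) ≤ (r : ℤ) := by exact_mod_cast hr
    have hcZ : (1 : ℤ) ≤ (c : ℤ) := by exact_mod_cast hc
    have hrcZ : (c : ℤ) ≤ (r : ℤ) ^ 2 := by exact_mod_cast hrc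
    have hnZ : (n : ℤ) = (c : ℤ) + r - ℓ := by omega
    rcases Nat.eq_zero_or_pos ℓ with hl0 | hl0
    · have hS0 : S = 0 := by rw [hS, Finset.range_eq_Ico, hl0]; simp
      omega
    have hl1 : 1 ≤ ℓ := hl0
    rcases le_or_gt n c with h1 | h1 <;> rcases le_or_gt n ℓ with h2 | h2
    · -- branch a
      rw [if_pos h1] at htail
      rw [if_pos (by omega : n ≤ m)] at hT
      have hpar : 2 * (ℓ:ℤ) = (c:ℤ) + r + 1 → (c:ℤ) + 1 ≤ (r:ℤ)^2 := by
        intro h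
        have hp : 2 * ℓ = c + r + 1 := by exact_mod_cast h
        obtain ⟨k2, hk2⟩ : ∃ k2, r ^ 2 + r = 2 * k2 := by
          obtain ⟨t, ht⟩ := Nat.even_mul_succ_self r
          exact ⟨t, by linear_combination ht⟩
        rcases eq_or_lt_of_le hrc with hcc | hcc
        · exfalso
          have hcr2 : c + r = 2 * k2 := by rw [hcc]; exact hk2
          omega
        · exact_mod_cast hcc
      have hSZ : 2 * (S:ℤ) + (n:ℤ) * ((n:ℤ) + 1) = (c:ℤ) * ((c:ℤ)+1) + 2*(c:ℤ)*(r:ℤ) := by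
        have h := h2S
        rw [htail] at h
        exact_mod_cast h
      have hTZ : 2 * (TB:ℤ) = (n:ℤ) * ((n:ℤ) + 1) := by exact_mod_cast hT
      zify [hl1]
      linarith [eg_br_a (c:ℤ) (r:ℤ) (ℓ:ℤ) (n:ℤ) (S:ℤ) (TB:ℤ) hrZ hrcZ hpar hnZ
        (by exact_mod_cast h2) hSZ hTZ]
    · -- branch b : ℓ < n ≤ c, m = ℓ
      rw [if_pos h1] at htail
      rw [if_neg (by omega : ¬ n ≤ m), show m = ℓ from by omega] at hT
      have hSZ : 2 * (S:ℤ) + (n:ℤ) * ((n:ℤ) + 1) = (c:ℤ) * ((c:ℤ)+1) + 2*(c:ℤ)*(r:ℤ) := by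
        have h := h2S
        rw [htail] at h
        exact_mod_cast h
      have hTZ : 2 * (TB:ℤ) = (ℓ:ℤ) * ((ℓ:ℤ) + 1) + 2*(ℓ:ℤ)*((n:ℤ) - ℓ) := by
        zify [Nat.le_of_lt h2] at hT
        linarith
      zify [hl1]
      linarith [eg_br_b (c:ℤ) (r:ℤ) (ℓ:ℤ) (n:ℤ) (S:ℤ) (TB:ℤ) hrZ hrcZ hnZ
        (by exact_mod_cast h1) (by exact_mod_cast h2) hSZ hTZ]
    · -- impossible: n > c and n ≤ ℓ still fine, but goes to c-branches
      rw [if_neg (by omega : ¬ n ≤ c)] at htail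
      rw [if_neg (by omega : ¬ n ≤ m)] at hT
      have hSZ : 2 * (S:ℤ) + ((c:ℤ) * ((c:ℤ)+1) + 2*(c:ℤ)*((n:ℤ) - c))
          = (c:ℤ) * ((c:ℤ)+1) + 2*(c:ℤ)*(r:ℤ) := by
        zify [Nat.le_of_lt h1] at htail
        zify at h2S
        linarith
      rcases le_or_gt c ℓ with hcl | hcl
      · rw [show m = c from by omega] at hT
        have hTZ : 2 * (TB:ℤ) = (c:ℤ) * ((c:ℤ)+1) + 2*(c:ℤ)*((n:ℤ) - c) := by
          zify [Nat.le_of_lt h1] at hT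
          linarith
        zify [hl1]
        linarith [eg_br_c1 (c:ℤ) (r:ℤ) (ℓ:ℤ) (n:ℤ) (S:ℤ) (TB:ℤ) hrZ hcZ hnZ
          (by exact_mod_cast h1) (by exact_mod_cast hcl) hSZ hTZ]
      · rw [show m = ℓ from by omega] at hT
        have hTZ : 2 * (TB:ℤ) = (ℓ:ℤ) * ((ℓ:ℤ) + 1) + 2*(ℓ:ℤ)*((n:ℤ) - ℓ) := by
          zify [show ℓ ≤ n from by omega] at hT
          linarith
        zify [hl1]
        linarith [eg_br_c2 (c:ℤ) (r:ℤ) (ℓ:ℤ) (n:ℤ) (S:ℤ) (TB:ℤ) hrZ hcZ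
          (by positivity) hnZ (by exact_mod_cast h1) hSZ hTZ]
    · -- branch c : n > c, n > ℓ
      rw [if_neg (by omega : ¬ n ≤ c)] at htail
      rw [if_neg (by omega : ¬ n ≤ m)] at hT
      have hSZ : 2 * (S:ℤ) + ((c:ℤ) * ((c:ℤ)+1) + 2*(c:ℤ)*((n:ℤ) - c))
          = (c:ℤ) * ((c:ℤ)+1) + 2*(c:ℤ)*(r:ℤ) := by
        zify [Nat.le_of_lt h1] at htail
        zify at h2S
        linarith
      rcases le_or_gt c ℓ with hcl | hcl
      · rw [show m = c from by omega] at hT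
        have hTZ : 2 * (TB:ℤ) = (c:ℤ) * ((c:ℤ)+1) + 2*(c:ℤ)*((n:ℤ) - c) := by
          zify [Nat.le_of_lt h1] at hT
          linarith
        zify [hl1]
        linarith [eg_br_c1 (c:ℤ) (r:ℤ) (ℓ:ℤ) (n:ℤ) (S:ℤ) (TB:ℤ) hrZ hcZ hnZ
          (by exact_mod_cast h1) (by exact_mod_cast hcl) hSZ hTZ]
      · rw [show m = ℓ from by omega] at hT
        have hTZ : 2 * (TB:ℤ) = (ℓ:ℤ) * ((ℓ:ℤ) + 1) + 2*(ℓ:ℤ)*((n:ℤ) - ℓ) := by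
          zify [Nat.le_of_lt h2] at hT
          linarith
        zify [hl1]
        linarith [eg_br_c2 (c:ℤ) (r:ℤ) (ℓ:ℤ) (n:ℤ) (S:ℤ) (TB:ℤ) hrZ hcZ
          (by positivity) hnZ (by exact_mod_cast h1) hSZ hTZ]
end

section
/- For every integer k₀ ≥ 4 there exists k ∈ {k₀, k₀+1, ..., k₀+8} such that k ≡ ⌊√k⌋ (mod 8) and ⌊√k⌋ < √k (i.e., k is not a perfect square). -/
private lemma key_aux (a k : ℕ) (h1 : a * a < k) (h2 : k < (a + 1) * (a + 1))
    (h3 : k % 8 = a % 8) :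
    k % 8 = Nat.sqrt k % 8 ∧ (Nat.sqrt k : ℝ) < Real.sqrt k := by
  have hs : Nat.sqrt k = a := by
    have hle : a ≤ Nat.sqrt k := Nat.le_sqrt.2 (le_of_lt h1)
    have hlt : Nat.sqrt k < a + 1 := Nat.sqrt_lt.2 h2
    omega
  refine ⟨by rw [hs, h3], ?_⟩
  rw [hs]
  refine (Real.lt_sqrt (by positivity)).2 ?_
  rw [sq]
  exact_mod_cast h1

/-- For every integer `k₀ ≥ 4` there exists
`k ∈ {k₀, k₀+1, …, k₀+8}` such that `k ≡ ⌊√k⌋ (mod 8)` and `⌊√k⌋ < √k`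
(i.e. `k` is not a perfect square). -/
theorem exists_k_sqrt_mod_eight (k₀ : ℕ) (hk₀ : 4 ≤ k₀) :
    ∃ k : ℕ, k₀ ≤ k ∧ k ≤ k₀ + 8 ∧
      k % 8 = Nat.sqrt k % 8 ∧ (Nat.sqrt k : ℝ) < Real.sqrt k := by
  rcases le_or_gt k₀ 11 with h11 | h11
  · obtain ⟨h3, h4⟩ := key_aux 3 11 (by norm_num) (by norm_num) (by norm_num)
    exact ⟨11, by omega, by omega, h3, h4⟩
  set r := Nat.sqrt k₀ with hr
  have hr3 : 3 ≤ r := Nat.le_sqrt.2 (by omega)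
  have hlo : r * r ≤ k₀ := Nat.sqrt_le k₀
  have hhi : k₀ < (r + 1) * (r + 1) := Nat.lt_succ_sqrt k₀
  set s := r + 1 with hs
  set S := s * s with hS
  set R := r * r with hR
  have hSR : S = R + 2 * r + 1 := by rw [hS, hR, hs]; ring
  have hrs : (r + 1) * (r + 1) = S := by rw [hS, hs]
  have hss : (s + 1) * (s + 1) = S + 2 * s + 1 := by rw [hS]; ring
  by_cases hA : k₀ + 8 < S
  · -- case A: all of [k₀, k₀+8] has sqrt = r
    set c := (r + 8 - k₀ % 8) % 8 with hc
    have hcm : (k₀ + c) % 8 = r % 8 := by omega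
    by_cases hk : R < k₀ + c
    · obtain ⟨p, q⟩ := key_aux r (k₀ + c) hk (by omega) hcm
      exact ⟨k₀ + c, by omega, by omega, p, q⟩
    · -- then k₀ + c = R, so k₀ = R, c = 0, and R ≡ r (mod 8)
      have hRm : R % 8 = r % 8 := by omega
      have hmul := Nat.mul_mod r r 8
      have key2 : r % 8 * (r % 8) % 8 = r % 8 := by rw [← hmul, ← hR]; exact hRm
      have h7 : r % 8 ≤ 7 := by omega
      have ht : r % 8 = 0 ∨ r % 8 = 1 := by
        generalize hgen : r % 8 = t at key2 h7
        interval_cases t <;> omega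
      have hr8 : 8 ≤ r := by omega
      obtain ⟨p, q⟩ := key_aux r (k₀ + 8) (by omega) (by omega) (by omega)
      exact ⟨k₀ + 8, by omega, by omega, p, q⟩
  · -- case B: S ≤ k₀ + 8
    have hR9 : r ≤ 3 → R ≤ 9 := fun h => by rw [hR]; exact Nat.mul_le_mul h h
    have hRk : R < k₀ := by omega
    by_cases hB1 : (S - 1 - r) % 8 < S - k₀
    · set k := S - 1 - (S - 1 - r) % 8 with hk
      obtain ⟨p, q⟩ := key_aux r k (by omega) (by omega) (by omega)
      exact ⟨k, by omega, by omega, p, q⟩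
    · set k := S + (7 * S + s) % 8 with hk
      obtain ⟨p, q⟩ := key_aux s k (by omega) (by omega) (by omega)
      exact ⟨k, by omega, by omega, p, q⟩
end

section
/- Every k-degenerate simple graph G with maximum degree Δ ≥ k satisfies 2|E(G)| ≤ Δ|V(G)| − (Δ − k)(Δ − k + 1)/2. -/
open SimpleGraph

/-- A graph is `k`-degenerate if every nonempty (induced) subgraph has a vertex of degree
at most `k` within it. -/
def KDegenerate {V : Type*} (G : SimpleGraph V) (k : ℕ) : Prop :=
  ∀ A : Finset V, A.Nonempty → ∃ v ∈ A, Set.ncard {u : V | u ∈ A ∧ G.Adj v u} ≤ k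

private lemma deg_aux {V : Type*} [Fintype V] [DecidableEq V]
    (G : SimpleGraph V) [DecidableRel G.Adj] (k : ℕ)
    (hdeg : KDegenerate G k) :
    ∀ A : Finset V, ∑ u ∈ A, G.degree u ≤
      ∑ i ∈ Finset.range A.card,
        min G.maxDegree (k + (Fintype.card V - A.card) + i) := by
  intro A
  induction A using Finset.strongInduction with
  | _ A ih =>
    rcases A.eq_empty_or_nonempty with rfl | hA
    · simp
    obtain ⟨v, hv, hk⟩ := hdeg A hA
    have hset : {u : V | u ∈ A ∧ G.Adj v u} = ↑(A.filter (fun u => G.Adj v u)) := by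
      ext u; simp
    rw [hset, Set.ncard_coe_finset] at hk
    have hAle : A.card ≤ Fintype.card V := A.card_le_univ
    have hA1 : 1 ≤ A.card := Finset.card_pos.2 hA
    have hcard : (A.erase v).card = A.card - 1 := Finset.card_erase_of_mem hv
    -- degree of v is at most k + (card V - A.card)
    have hdv : G.degree v ≤ k + (Fintype.card V - A.card) := by
      have hsub : G.neighborFinset v ⊆ A.filter (fun u => G.Adj v u) ∪ Aᶜ := by
        intro u hu
        rw [SimpleGraph.mem_neighborFinset] at hu
        by_cases h : u ∈ A
        · exact Finset.mem_union_left _ (Finset.mem_filter.2 ⟨h, hu⟩)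
        · exact Finset.mem_union_right _ (Finset.mem_compl.2 h)
      calc G.degree v = (G.neighborFinset v).card := rfl
        _ ≤ (A.filter (fun u => G.Adj v u) ∪ Aᶜ).card := Finset.card_le_card hsub
        _ ≤ (A.filter (fun u => G.Adj v u)).card + Aᶜ.card := Finset.card_union_le _ _
        _ ≤ k + (Fintype.card V - A.card) := by
            rw [Finset.card_compl]; exact Nat.add_le_add hk le_rfl
    have hdvΔ : G.degree v ≤ G.maxDegree := G.degree_le_maxDegree v
    have hsum : G.degree v + ∑ u ∈ A.erase v, G.degree u = ∑ u ∈ A, G.degree u :=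
      Finset.add_sum_erase A (fun u => G.degree u) hv
    have hih := ih (A.erase v) (Finset.erase_ssubset hv)
    -- rewrite the range sum
    have hAc : A.card = (A.card - 1) + 1 := by omega
    rw [hAc, Finset.sum_range_succ']
    have hshift : ∀ i, min G.maxDegree (k + (Fintype.card V - ((A.card - 1) + 1)) + (i + 1))
        = min G.maxDegree (k + (Fintype.card V - (A.erase v).card) + i) := by
      intro i; rw [hcard]; congr 1; omega
    rw [← hsum]
    have h2 : ∑ u ∈ A.erase v, G.degree u ≤
        ∑ i ∈ Finset.range (A.card - 1),
          min G.maxDegree (k + (Fintype.card V - ((A.card - 1) + 1)) + (i + 1)) := by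
      rw [Finset.sum_congr rfl (fun i _ => hshift i), ← hcard]
      exact hih
    have h1 : G.degree v ≤ min G.maxDegree (k + (Fintype.card V - ((A.card - 1) + 1)) + 0) := by
      rw [← hAc]; exact le_min hdvΔ (by omega)
    omega

private lemma tri_aux (d n : ℕ) (hdn : d ≤ n) :
    2 * ∑ i ∈ Finset.range n, (d - i) = d * (d + 1) := by
  have h1 : ∑ i ∈ Finset.range n, (d - i) = ∑ i ∈ Finset.range d, (d - i) := by
    rw [eq_comm]
    apply Finset.sum_subset (Finset.range_subset_range.2 hdn)
    intro i _ hi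
    rw [Finset.mem_range, not_lt] at hi
    omega
  have h2 : ∑ i ∈ Finset.range d, (d - (d - 1 - i)) = ∑ i ∈ Finset.range d, (d - i) :=
    Finset.sum_range_reflect (fun i => d - i) d
  have h3 : ∑ i ∈ Finset.range d, (d - (d - 1 - i)) = ∑ i ∈ Finset.range d, (i + 1) :=
    Finset.sum_congr rfl (fun i hi => by rw [Finset.mem_range] at hi; omega)
  have h4 : ∑ i ∈ Finset.range (d + 1), i = ∑ i ∈ Finset.range d, (i + 1) := by
    simp [Finset.sum_range_succ']
  have h5 : (∑ i ∈ Finset.range (d + 1), i) * 2 = (d + 1) * d :=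
    Finset.sum_range_id_mul_two (d + 1)
  rw [h1, ← h2, h3, ← h4]
  rw [Nat.mul_comm (d+1) d] at h5
  omega

/-- Every `k`-degenerate simple graph `G` with maximum degree `Δ ≥ k`
satisfies `2|E(G)| ≤ Δ|V(G)| − (Δ − k)(Δ − k + 1)/2`. -/
theorem edge_bound_of_degenerate {V : Type*} [Fintype V] [DecidableEq V]
    (G : SimpleGraph V) [DecidableRel G.Adj] (k : ℕ)
    (hdeg : KDegenerate G k) (hΔ : k ≤ G.maxDegree) :
    (2 * G.edgeFinset.card : ℚ)
      ≤ G.maxDegree * Fintype.card V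
        - (G.maxDegree - k) * (G.maxDegree - k + 1) / 2 := by
  have hdn : G.maxDegree - k ≤ Fintype.card V := by
    rcases isEmpty_or_nonempty V with hV | hV
    · have h0 : G.maxDegree = 0 := by
        simp [SimpleGraph.maxDegree, Finset.univ_eq_empty]
      simp [h0]
    · have := G.maxDegree_lt_card_verts
      omega
  have hmain := deg_aux G k hdeg Finset.univ
  rw [Finset.card_univ, Nat.sub_self] at hmain
  have hE : ∑ v, G.degree v = 2 * G.edgeFinset.card := G.sum_degrees_eq_twice_card_edges
  set n := Fintype.card V
  set Δ := G.maxDegree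
  set d := Δ - k with hd
  have hsplit : ∀ i, min Δ (k + 0 + i) + (d - i) = Δ := by intro i; omega
  have hsum : ∑ i ∈ Finset.range n, min Δ (k + 0 + i) + ∑ i ∈ Finset.range n, (d - i)
      = n * Δ := by
    rw [← Finset.sum_add_distrib, Finset.sum_congr rfl (fun i _ => hsplit i),
      Finset.sum_const, Finset.card_range, smul_eq_mul]
  have htri := tri_aux d n hdn
  have hnat : 4 * G.edgeFinset.card + d * (d + 1) ≤ 2 * (n * Δ) := by
    have h1 : 4 * G.edgeFinset.card ≤ 2 * ∑ i ∈ Finset.range n, min Δ (k + 0 + i) := by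
      omega
    calc 4 * G.edgeFinset.card + d * (d + 1)
        ≤ 2 * ∑ i ∈ Finset.range n, min Δ (k + 0 + i)
          + 2 * ∑ i ∈ Finset.range n, (d - i) := by omega
      _ = 2 * (n * Δ) := by rw [← Nat.mul_add, hsum]
  have hcast : ((Δ : ℚ) - k) = (d : ℚ) := by
    rw [hd, Nat.cast_sub hΔ]
  rw [hcast]
  have h2 := (Nat.cast_le (α := ℚ)).2 hnat
  push_cast at h2
  linarith
end

section
/- Let G_p be the complement of the disjoint union of the stars K_{1,1}, K_{1,2}, ..., K_{1,p}, let n = p(p+1)/2 + p be its number of vertices, Δ = n − 2 its maximum degree, and k = n − 1 − p. Then G_p is k-degenerate and satisfies 2|E(G_p)| = Δn − (Δ − k)(Δ − k + 1)/2. -/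
open SimpleGraph Finset

/-- Vertices of the disjoint union of the stars `K_{1,1}, K_{1,2}, …, K_{1,p}`:
the pair `(i, a)` with `a ≤ i + 1` is the `a`-th vertex of the star `K_{1,i+1}`,
whose centre is `(i, 0)` and whose leaves are `(i, 1), …, (i, i+1)`. -/
def StarVert (p : ℕ) : Type := {q : Fin p × Fin (p + 1) // q.2.1 ≤ q.1.1 + 1}

instance (p : ℕ) : Fintype (StarVert p) := by unfold StarVert; infer_instance

instance (p : ℕ) : DecidableEq (StarVert p) := by unfold StarVert; infer_instance

/-- The disjoint union of the stars `K_{1,1}, …, K_{1,p}`: two vertices are adjacent iff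
they lie in the same star and exactly one of them is the centre. -/
def starsDisjUnion (p : ℕ) : SimpleGraph (StarVert p) :=
  SimpleGraph.fromRel
    (fun u v => u.val.1 = v.val.1 ∧ u.val.2.1 = 0 ∧ v.val.2.1 ≠ 0)

instance (p : ℕ) : DecidableRel (starsDisjUnion p).Adj := fun u v =>
  inferInstanceAs (Decidable (u ≠ v ∧ _ ))

/-- `G_p`: the complement of the disjoint union of the stars `K_{1,1}, …, K_{1,p}`. -/
def Gp (p : ℕ) : SimpleGraph (StarVert p) := (starsDisjUnion p)ᶜ

instance (p : ℕ) : DecidableRel (Gp p).Adj := fun u v =>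
  inferInstanceAs (Decidable (u ≠ v ∧ ¬ (starsDisjUnion p).Adj u v))

-- extensionality for StarVert
lemma StarVert.ext' {p : ℕ} {u v : StarVert p}
    (h1 : u.val.1.1 = v.val.1.1) (h2 : u.val.2.1 = v.val.2.1) : u = v := by
  apply Subtype.ext
  apply Prod.ext (Fin.ext h1) (Fin.ext h2)

-- adjacency characterization
lemma stars_adj_iff {p : ℕ} (u v : StarVert p) :
    (starsDisjUnion p).Adj u v ↔
      u.val.1.1 = v.val.1.1 ∧ ((u.val.2.1 = 0 ∧ v.val.2.1 ≠ 0) ∨ (v.val.2.1 = 0 ∧ u.val.2.1 ≠ 0)) := by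
  constructor
  · rintro ⟨hne, h | h⟩
    · exact ⟨congrArg Fin.val h.1, Or.inl ⟨h.2.1, h.2.2⟩⟩
    · exact ⟨(congrArg Fin.val h.1).symm, Or.inr ⟨h.2.1, h.2.2⟩⟩
  · rintro ⟨h1, h | h⟩
    · refine ⟨fun he => h.2 (he ▸ h.1), Or.inl ⟨Fin.ext h1, h.1, h.2⟩⟩
    · refine ⟨fun he => h.2 (he ▸ h.1), Or.inr ⟨Fin.ext h1.symm, h.1, h.2⟩⟩

def starEquiv (p : ℕ) : StarVert p ≃ Σ i : Fin p, Fin (i.1 + 2) where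
  toFun v := ⟨v.val.1, ⟨v.val.2.1, by have := v.property; omega⟩⟩
  invFun x := ⟨(x.1, ⟨x.2.1, by have := x.2.2; have := x.1.2; omega⟩), by have := x.2.2; simpa using by omega⟩
  left_inv v := by apply StarVert.ext' <;> rfl
  right_inv x := by
    apply Sigma.ext
    · rfl
    · apply heq_of_eq; apply Fin.ext; rfl


lemma card_starVert (p : ℕ) : Fintype.card (StarVert p) = p * (p + 1) / 2 + p := by
  rw [Fintype.card_congr (starEquiv p), Fintype.card_sigma]
  simp only [Fintype.card_fin]
  rw [Fin.sum_univ_eq_sum_range (fun i => i + 2)]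
  have h1 : (∑ i ∈ Finset.range p, i) * 2 = p * (p - 1) := Finset.sum_range_id_mul_two p
  have h2 : ∑ i ∈ Finset.range p, (i + 2) = (∑ i ∈ Finset.range p, i) + 2 * p := by
    rw [Finset.sum_add_distrib]; simp [mul_comm]
  have h3 : p * (p + 1) = p * (p - 1) + 2 * p := by cases p with
    | zero => simp
    | succ q => simp [Nat.succ_sub_one]; ring
  have h4 : 2 ∣ p * (p + 1) := (Nat.even_mul_succ_self p).two_dvd
  omega

lemma deg_leaf {p : ℕ} (v : StarVert p) (h : v.val.2.1 ≠ 0) :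
    (starsDisjUnion p).degree v = 1 := by
  have : (starsDisjUnion p).neighborFinset v = {⟨(v.val.1, 0), by simp⟩} := by
    ext u
    simp only [mem_neighborFinset, Finset.mem_singleton, stars_adj_iff]
    constructor
    · rintro ⟨h1, ⟨h2, -⟩ | ⟨h2, h3⟩⟩
      · exact absurd h2 h
      · exact Finset.mem_singleton.mpr (StarVert.ext' h1.symm h2)
    · intro hu; obtain rfl := Finset.mem_singleton.mp hu
      exact ⟨rfl, Or.inr ⟨rfl, h⟩⟩
  rw [SimpleGraph.degree, this]; exact Finset.card_singleton _

lemma deg_centre {p : ℕ} (v : StarVert p) (h : v.val.2.1 = 0) :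
    (starsDisjUnion p).degree v = v.val.1.1 + 1 := by
  rw [SimpleGraph.degree, ← Fintype.card_fin (v.val.1.1 + 1), ← Finset.card_univ]
  refine Finset.card_nbij'
    (fun u => (⟨min (u.val.2.1 - 1) v.val.1.1, by omega⟩ : Fin (v.val.1.1 + 1)))
    (fun j => (⟨(v.val.1, ⟨j.1 + 1, by have := j.2; have := v.val.1.2; omega⟩),
      by simpa using by have := j.2; omega⟩ : StarVert p)) ?_ ?_ ?_ ?_
  · intro u _; exact Finset.mem_univ _
  · intro j _
    refine Finset.mem_coe.mpr ((mem_neighborFinset _ _ _).mpr ((stars_adj_iff _ _).mpr ?_))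
    exact ⟨rfl, Or.inl ⟨h, by simp⟩⟩
  · intro u hu
    replace hu := (stars_adj_iff _ _).mp ((mem_neighborFinset _ _ _).mp (Finset.mem_coe.mp hu))
    obtain ⟨h1, ⟨h2, h3⟩ | ⟨h2, h3⟩⟩ := hu
    · refine StarVert.ext' ?_ ?_
      · exact h1
      · show min (u.val.2.1 - 1) v.val.1.1 + 1 = u.val.2.1
        have := u.property
        omega
    · exact (h3 h).elim
  · intro j _
    apply Fin.ext
    have := j.2
    simp only
    omega

lemma stars_deg_pos {p : ℕ} (v : StarVert p) : 0 < (starsDisjUnion p).degree v := by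
  by_cases h : v.val.2.1 = 0
  · rw [deg_centre v h]; omega
  · rw [deg_leaf v h]; omega

lemma stars_deg_le {p : ℕ} (v : StarVert p) :
    (starsDisjUnion p).degree v ≤ Fintype.card (StarVert p) - 1 := by
  have := (starsDisjUnion p).degree_lt_card_verts v
  omega

lemma gp_deg {p : ℕ} (v : StarVert p) :
    (Gp p).degree v = Fintype.card (StarVert p) - 1 - (starsDisjUnion p).degree v := by
  classical
  have h := (starsDisjUnion p).degree_compl (v := v)
  unfold Gp
  convert h using 2

lemma card_star {p : ℕ} (i : Fin p) :
    (Finset.univ.filter (fun u : StarVert p => u.val.1.1 = i.1)).card = i.1 + 2 := by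
  rw [← Fintype.card_fin (i.1 + 2), ← Finset.card_univ]
  refine Finset.card_nbij'
    (fun u => (⟨min u.val.2.1 (i.1 + 1), by omega⟩ : Fin (i.1 + 2)))
    (fun j => (⟨(i, ⟨j.1, by have := j.2; have := i.2; omega⟩),
      by simpa using by have := j.2; omega⟩ : StarVert p)) ?_ ?_ ?_ ?_
  · intro u _; exact Finset.mem_univ _
  · intro j _; exact Finset.mem_coe.mpr (Finset.mem_filter.mpr ⟨Finset.mem_univ _, rfl⟩)
  · intro u hu
    replace hu := Finset.mem_filter.mp (Finset.mem_coe.mp hu)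
    refine StarVert.ext' ?_ ?_
    · exact hu.2.symm
    · show min u.val.2.1 (i.1 + 1) = u.val.2.1
      have := u.property
      omega
  · intro j _
    apply Fin.ext
    show min j.1 (i.1 + 1) = j.1
    have := j.2
    omega

lemma sum_stars_deg (p : ℕ) :
    ∑ v : StarVert p, (starsDisjUnion p).degree v = p * (p + 1) := by
  have : ∑ v : StarVert p, (starsDisjUnion p).degree v
      = ∑ x : Σ i : Fin p, Fin (i.1 + 2), (if x.2.1 = 0 then x.1.1 + 1 else 1) := by
    refine Fintype.sum_equiv (starEquiv p) _ _ (fun v => ?_)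
    by_cases h : v.val.2.1 = 0
    · rw [deg_centre v h]
      show v.val.1.1 + 1 = if v.val.2.1 = 0 then v.val.1.1 + 1 else 1; simp [h]
    · rw [deg_leaf v h]
      show 1 = if v.val.2.1 = 0 then v.val.1.1 + 1 else 1; simp [h]
  rw [this, ← Finset.univ_sigma_univ, Finset.sum_sigma]
  have inner : ∀ i : Fin p,
      ∑ j : Fin (i.1 + 2), (if j.1 = 0 then i.1 + 1 else 1) = 2 * i.1 + 2 := by
    intro i
    rw [Fin.sum_univ_succ]
    simp only [Fin.val_zero, if_true, Fin.val_succ]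
    simp only [Nat.succ_ne_zero, if_false, Finset.sum_const, Finset.card_univ, Fintype.card_fin,
      smul_eq_mul, mul_one]
    omega
  calc ∑ i : Fin p, ∑ j : Fin (i.1 + 2), (if j.1 = 0 then i.1 + 1 else 1)
      = ∑ i : Fin p, (2 * i.1 + 2) := by
        exact Finset.sum_congr rfl (fun i _ => inner i)
    _ = ∑ i ∈ Finset.range p, (2 * i + 2) := Fin.sum_univ_eq_sum_range (fun i => 2 * i + 2) p
    _ = p * (p + 1) := by
        have h1 : (∑ i ∈ Finset.range p, i) * 2 = p * (p - 1) := Finset.sum_range_id_mul_two p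
        have h2 : ∑ i ∈ Finset.range p, (2 * i + 2) = 2 * (∑ i ∈ Finset.range p, i) + 2 * p := by
          rw [Finset.sum_add_distrib, Finset.mul_sum]; simp [mul_comm]
        have h3 : p * (p + 1) = p * (p - 1) + 2 * p := by cases p with
          | zero => simp
          | succ q => simp [Nat.succ_sub_one]; ring
        omega

lemma gp_maxDeg (p : ℕ) (hp : 0 < p) :
    (Gp p).maxDegree = Fintype.card (StarVert p) - 2 := by
  have hcard : 2 ≤ Fintype.card (StarVert p) := by
    rw [card_starVert]
    have : 1 * 2 ≤ p * (p + 1) := Nat.mul_le_mul hp (by omega)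
    have := Nat.div_le_div_right (c := 2) this
    simp at this
    omega
  apply le_antisymm
  · apply SimpleGraph.maxDegree_le_of_forall_degree_le
    intro v
    rw [gp_deg v]
    have := stars_deg_pos v
    omega
  · have hl : (1 : ℕ) < p + 1 := by omega
    set ℓ : StarVert p := ⟨(⟨0, hp⟩, ⟨1, hl⟩), by simp⟩ with hℓ
    have hd : (Gp p).degree ℓ = Fintype.card (StarVert p) - 2 := by
      rw [gp_deg ℓ, deg_leaf ℓ (by simp [hℓ])]
      omega
    rw [← hd]
    exact (Gp p).degree_le_maxDegree ℓ

/-- Let `G_p` be the complement of the disjoint union of the stars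
`K_{1,1}, …, K_{1,p}`, let `n = p(p+1)/2 + p` be its number of vertices, `Δ = n − 2`
its maximum degree and `k = n − 1 − p`. Then `G_p` is `k`-degenerate and satisfies
`2|E(G_p)| = Δn − (Δ − k)(Δ − k + 1)/2`. -/
theorem Gp_degenerate_and_tight (p : ℕ) (hp : 0 < p)
    (n Δ k : ℕ) (hn : n = p * (p + 1) / 2 + p) (hΔ : Δ = n - 2) (hk : k = n - 1 - p) :
    Fintype.card (StarVert p) = n ∧
    (Gp p).maxDegree = Δ ∧
    KDegenerate (Gp p) k ∧
    (2 * (Gp p).edgeFinset.card : ℚ) = Δ * n - (Δ - k : ℕ) * ((Δ - k : ℕ) + 1) / 2 := by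
  classical
  have hcard : Fintype.card (StarVert p) = n := by rw [card_starVert, hn]
  obtain ⟨t, ht⟩ := Nat.even_mul_succ_self p
  have hpp : p ≤ p * p := Nat.le_mul_of_pos_left p hp
  have hq : p * (p + 1) = p * p + p := by ring
  have hnt : n = t + p := by rw [hn]; omega
  have htp : p ≤ t := by omega
  have hn2 : 2 ≤ n := by omega
  refine ⟨hcard, ?_, ?_, ?_⟩
  · rw [gp_maxDeg p hp, hcard, hΔ]
  · -- degeneracy
    intro A hA
    have hAle : A.card ≤ n := by
      rw [← hcard, ← Finset.card_univ]; exact Finset.card_le_univ A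
    by_cases hbig : A.card ≤ n - p
    · obtain ⟨v, hv⟩ := hA
      refine ⟨v, hv, ?_⟩
      have hsub : {u : StarVert p | u ∈ A ∧ (Gp p).Adj v u} ⊆ ↑(A.erase v) := by
        rintro u ⟨hu, hadj⟩
        simp only [Finset.coe_erase, Set.mem_diff, Finset.mem_coe, Set.mem_singleton_iff]
        exact ⟨hu, hadj.ne'⟩
      have hle := Set.ncard_le_ncard hsub (Finset.finite_toSet _)
      rw [Set.ncard_coe_finset] at hle
      have hce := Finset.card_erase_of_mem hv
      omega
    · push_neg at hbig
      set m := n - A.card with hm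
      have hmp : m ≤ p - 1 := by omega
      have hex : ∃ i : Fin p, p - 1 - m ≤ i.1 ∧
          ∀ u : StarVert p, u.val.1.1 = i.1 → u ∈ A := by
        by_contra hcon
        push_neg at hcon
        set S : Finset (Fin p) := Finset.univ.filter (fun i => p - 1 - m ≤ i.1) with hSdef
        set M : Finset (StarVert p) := Finset.univ \ A with hMdef
        have hS : S.card = m + 1 := by
          have hEq : S = Finset.Ici (⟨p - 1 - m, by omega⟩ : Fin p) := by
            ext i; simp [hSdef, Finset.mem_Ici, Fin.le_def]
          rw [hEq, Fin.card_Ici]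
          simp only
          omega
        have hMc : M.card = m := by
          rw [hMdef, Finset.card_sdiff_of_subset (Finset.subset_univ A), Finset.card_univ, hcard]
        set f : Fin p → StarVert p := fun i =>
          if hi : ∃ u : StarVert p, u.val.1.1 = i.1 ∧ u ∉ A then hi.choose
          else ⟨(i, 0), by simp⟩ with hfdef
        have hspec : ∀ i ∈ S, (f i).val.1.1 = i.1 ∧ f i ∉ A := by
          intro i hi
          have hif : ∃ u : StarVert p, u.val.1.1 = i.1 ∧ u ∉ A := by
            refine hcon i ?_
            simpa [hSdef] using hi
          simp only [hfdef, dif_pos hif]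
          show (f i).val.1.1 = i.1 ∧ f i ∉ A
          rw [show f i = hif.choose from dif_pos hif]
          exact hif.choose_spec
        have hmaps : ∀ i ∈ S, f i ∈ M := by
          intro i hi
          simp only [hMdef, Finset.mem_sdiff, Finset.mem_univ, true_and]
          exact (hspec i hi).2
        obtain ⟨i, hi, i', hi', hne, heq⟩ :=
          Finset.exists_ne_map_eq_of_card_lt_of_maps_to (by omega) hmaps
        exact hne (Fin.ext (by rw [← (hspec i hi).1, ← (hspec i' hi').1, heq]))
      obtain ⟨i, hile, hstar⟩ := hex
      set c : StarVert p := ⟨(i, 0), by simp⟩ with hcdef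
      have hcA : c ∈ A := hstar c rfl
      refine ⟨c, hcA, ?_⟩
      set St : Finset (StarVert p) :=
        Finset.univ.filter (fun u : StarVert p => u.val.1.1 = i.1) with hStdef
      have hStA : St ⊆ A := by
        intro u hu
        exact hstar u (by simpa [hStdef] using hu)
      have hsub : {u : StarVert p | u ∈ A ∧ (Gp p).Adj c u} ⊆ ↑(A \ St) := by
        rintro u ⟨hu, hadj⟩
        obtain ⟨hne, hnadj⟩ := hadj
        simp only [Finset.coe_sdiff, Set.mem_diff, Finset.mem_coe, hStdef,
          Finset.mem_filter, Finset.mem_univ, true_and]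
        refine ⟨hu, fun hfst => ?_⟩
        by_cases h0 : u.val.2.1 = 0
        · exact hne (StarVert.ext' (by simpa [hcdef] using hfst.symm) (by simp [hcdef, h0]))
        · exact hnadj ((stars_adj_iff c u).2 ⟨by simpa [hcdef] using hfst.symm, Or.inl ⟨rfl, h0⟩⟩)
      have hle := Set.ncard_le_ncard hsub (Finset.finite_toSet _)
      rw [Set.ncard_coe_finset, Finset.card_sdiff_of_subset hStA] at hle
      have hSt : St.card = i.1 + 2 := card_star i
      have hi2 := i.2
      omega
  · -- edge count
    have hsum : (∑ v : StarVert p, (Gp p).degree v) + p * (p + 1) = n * (n - 1) := by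
      rw [← sum_stars_deg p, ← Finset.sum_add_distrib]
      have hpt : ∀ v : StarVert p,
          (Gp p).degree v + (starsDisjUnion p).degree v = n - 1 := by
        intro v
        have h1 := gp_deg v
        have h2 := stars_deg_le v
        rw [hcard] at h1 h2
        omega
      rw [Finset.sum_congr rfl (fun v _ => hpt v), Finset.sum_const, Finset.card_univ, hcard,
        smul_eq_mul, mul_comm]
    have h2E : 2 * (Gp p).edgeFinset.card + p * (p + 1) = n * (n - 1) := by
      rw [← SimpleGraph.sum_degrees_eq_twice_card_edges]
      exact hsum
    have hΔk : Δ - k = p - 1 := by omega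
    rw [hΔk]
    have hpQ : ((p - 1 : ℕ) : ℚ) = (p : ℚ) - 1 := by
      rw [Nat.cast_sub hp]; simp
    have hΔQ : ((Δ : ℕ) : ℚ) = (n : ℚ) - 2 := by
      rw [hΔ, Nat.cast_sub hn2]; simp
    have hnQ : (n : ℚ) = (t : ℚ) + p := by exact_mod_cast congrArg (Nat.cast : ℕ → ℚ) hnt
    have htQ : (p : ℚ) * (p + 1) = 2 * t := by
      have : ((p * (p + 1) : ℕ) : ℚ) = ((t + t : ℕ) : ℚ) := by rw [ht]
      push_cast at this
      linarith
    have hEQ : (2 * (Gp p).edgeFinset.card : ℚ) + (p : ℚ) * (p + 1) = (n : ℚ) * ((n : ℚ) - 1) := by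
      have := congrArg (Nat.cast : ℕ → ℚ) h2E
      push_cast [Nat.cast_sub (by omega : 1 ≤ n)] at this
      linarith [this]
    rw [hpQ, hΔQ]
    have h2card : (2 * (Gp p).edgeFinset.card : ℚ)
        = (n : ℚ) * ((n : ℚ) - 1) - (p : ℚ) * (p + 1) := by linarith
    rw [h2card, hnQ]
    linear_combination (-(1:ℚ)/2) * htQ
end
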